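/- arXiv:2304.10774 — 6 statements merged into one kernel-verified Lean document; each statement's English description precedes it below -/
import Mathlib

section
/- Let (H,g) be a real Hilbert space with complexification H_ℂ and real structure α, and let H_ℂ = W⁺ ⊕ W⁻ be an orthogonal decomposition with α(W⁺) = W⁻ (an orthogonal polarization). Define J_W = i(P⁺ - P⁻) where P^± are the orthogonal projections onto W^±, and ω_W(v,w) = g(J_W v, w). Then J_W commutes with α (hence restricts to H), J_W² = -1, ω_W restricts to a real-valued strong symplectic form on H, and (g, J_W, ω_W) is a compatible triple on H. -/
/-- An orthogonal polarization E = W⁺ ⊕ W⁻ (orthogonal, α(W⁺) = W⁻) of the complexification of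
a real Hilbert space induces J_W = i(P⁺ - P⁻), which commutes with α (hence restricts to H),
squares to -1, and the associated form ω_W(v,w) = g(J_W v, w) restricts to a real-valued
antisymmetric form on H such that (g, J_W, ω_W) is a compatible triple. -/
theorem orthogonal_polarization_gives_compatible_triple {E : Type*} [NormedAddCommGroup E]
    [InnerProductSpace ℂ E] [CompleteSpace E]
    (α : E → E)
    (hα_add : ∀ x y, α (x + y) = α x + α y)
    (hα_smul : ∀ (c : ℂ) (x : E), α (c • x) = (starRingEnd ℂ) c • α x)
    (hα_invol : ∀ x, α (α x) = x)
    (hα_inner : ∀ x y, (inner ℂ (α x) (α y) : ℂ) = (inner ℂ y x : ℂ))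
    (Wp Wm : Submodule ℂ E)
    (hWp_closed : IsClosed (Wp : Set E)) (hWm_closed : IsClosed (Wm : Set E))
    (horth : ∀ x ∈ Wp, ∀ y ∈ Wm, (inner ℂ x y : ℂ) = 0)
    (hcompl : IsCompl Wp Wm)
    (hαW : α '' (Wp : Set E) = (Wm : Set E))
    (Pp Pm : E →L[ℂ] E)
    (hPp_mem : ∀ x, Pp x ∈ Wp) (hPm_mem : ∀ x, Pm x ∈ Wm)
    (hsum : ∀ x, Pp x + Pm x = x)
    (hPp_id : ∀ x ∈ Wp, Pp x = x) (hPm_id : ∀ x ∈ Wm, Pm x = x) :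
    ∀ JW : E →L[ℂ] E, JW = Complex.I • (Pp - Pm) →
      (∀ x, JW (α x) = α (JW x)) ∧
      (∀ x, JW (JW x) = -x) ∧
      (∀ v w, α v = v → α w = w → (inner ℂ w (JW v) : ℂ).im = 0) ∧
      (∀ v w, α v = v → α w = w → (inner ℂ w (JW v) : ℂ) = - (inner ℂ v (JW w) : ℂ)) ∧
      (∀ v w, α v = v → α w = w → (inner ℂ w v : ℂ) = (inner ℂ (JW w) (JW v) : ℂ)) ∧
      Function.Bijective (⇑JW) := by
  intro JW hJW
  have hPmWp : ∀ x ∈ Wp, Pm x = 0 := by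
    intro x hx
    have h := hsum x
    rw [hPp_id x hx] at h
    exact add_eq_left.mp h
  have hPpWm : ∀ x ∈ Wm, Pp x = 0 := by
    intro x hx
    have h := hsum x
    rw [hPm_id x hx] at h
    exact add_eq_right.mp h
  have hαWm : ∀ x ∈ Wp, α x ∈ Wm := by
    intro x hx
    have h : α x ∈ α '' (Wp : Set E) := ⟨x, hx, rfl⟩
    rwa [hαW] at h
  have hαWp : ∀ x ∈ Wm, α x ∈ Wp := by
    intro x hx
    have h : x ∈ α '' (Wp : Set E) := by rw [hαW]; exact hx
    obtain ⟨y, hy, hyx⟩ := h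
    rw [← hyx, hα_invol]; exact hy
  have hJ : ∀ x, JW x = Complex.I • (Pp x - Pm x) := by
    intro x; rw [hJW]; simp
  have hα_sub : ∀ x y, α (x - y) = α x - α y := by
    intro x y
    have h : x - y = x + (-1 : ℂ) • y := by simp [sub_eq_add_neg]
    rw [h, hα_add, hα_smul]; simp [sub_eq_add_neg]
  have hPpα : ∀ x, Pp (α x) = α (Pm x) := by
    intro x
    have hd : α x = α (Pp x) + α (Pm x) := by rw [← hα_add, hsum]
    rw [hd, map_add, hPpWm _ (hαWm _ (hPp_mem x)), hPp_id _ (hαWp _ (hPm_mem x)), zero_add]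
  have hPmα : ∀ x, Pm (α x) = α (Pp x) := by
    intro x
    have hd : α x = α (Pp x) + α (Pm x) := by rw [← hα_add, hsum]
    rw [hd, map_add, hPm_id _ (hαWm _ (hPp_mem x)), hPmWp _ (hαWp _ (hPm_mem x)), add_zero]
  have hcomm : ∀ x, JW (α x) = α (JW x) := by
    intro x
    rw [hJ, hJ, hPpα, hPmα, hα_smul, hα_sub, Complex.conj_I, smul_sub, smul_sub]
    simp only [neg_smul]
    abel
  have hsq : ∀ x, JW (JW x) = -x := by
    intro x
    have e1 : Pp (JW x) = Complex.I • Pp x := by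
      rw [hJ, map_smul, map_sub, hPp_id _ (hPp_mem x), hPpWm _ (hPm_mem x), sub_zero]
    have e2 : Pm (JW x) = -(Complex.I • Pm x) := by
      rw [hJ, map_smul, map_sub, hPmWp _ (hPp_mem x), hPm_id _ (hPm_mem x), zero_sub, smul_neg]
    rw [hJ, e1, e2, sub_neg_eq_add, ← smul_add, smul_smul, Complex.I_mul_I, hsum, neg_one_smul]
  have horth2 : ∀ y ∈ Wm, ∀ x ∈ Wp, (inner ℂ y x : ℂ) = 0 := by
    intro y hy x hx
    rw [← inner_conj_symm, horth x hx y hy, map_zero]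
  have key : ∀ v w, (inner ℂ w (JW v) : ℂ)
      = Complex.I * ((inner ℂ (Pp w) (Pp v) : ℂ) - (inner ℂ (Pm w) (Pm v) : ℂ)) := by
    intro v w
    have h1 : (inner ℂ w (JW v) : ℂ) = inner ℂ (Pp w + Pm w) (Complex.I • (Pp v - Pm v)) := by
      rw [hsum, ← hJ]
    rw [h1, inner_smul_right, inner_add_left, inner_sub_right, inner_sub_right,
      horth _ (hPp_mem w) _ (hPm_mem v), horth2 _ (hPm_mem w) _ (hPp_mem v)]
    ring
  refine ⟨hcomm, hsq, ?_, ?_, ?_, ?_⟩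
  · intro v w hv hw
    have h := hα_inner w (JW v)
    rw [hw, ← hcomm, hv] at h
    have h2 : (starRingEnd ℂ) (inner ℂ w (JW v) : ℂ) = (inner ℂ w (JW v) : ℂ) := by
      rw [inner_conj_symm, ← h]
    exact Complex.conj_eq_iff_im.mp h2
  · intro v w hv hw
    have hvp : Pp v = α (Pm v) := by rw [← hPpα, hv]
    have hvm : Pm v = α (Pp v) := by rw [← hPmα, hv]
    have hwp : Pp w = α (Pm w) := by rw [← hPpα, hw]
    have hwm : Pm w = α (Pp w) := by rw [← hPmα, hw]
    rw [key v w, key w v]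
    have e1 : (inner ℂ (Pp w) (Pp v) : ℂ) = inner ℂ (Pm v) (Pm w) := by
      rw [hwp, hvp, hα_inner]
    have e2 : (inner ℂ (Pm w) (Pm v) : ℂ) = inner ℂ (Pp v) (Pp w) := by
      rw [hwm, hvm, hα_inner]
    rw [e1, e2]; ring
  · intro v w _ _
    have h1 : (inner ℂ w v : ℂ) = inner ℂ (Pp w + Pm w) (Pp v + Pm v) := by rw [hsum, hsum]
    have h2 : (inner ℂ (JW w) (JW v) : ℂ)
        = inner ℂ (Complex.I • (Pp w - Pm w)) (Complex.I • (Pp v - Pm v)) := by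
      rw [← hJ, ← hJ]
    rw [h1, h2, inner_smul_left, inner_smul_right, inner_sub_left, inner_sub_right,
      inner_sub_right, inner_add_left, inner_add_right, inner_add_right,
      horth _ (hPp_mem w) _ (hPm_mem v), horth2 _ (hPm_mem w) _ (hPp_mem v),
      Complex.conj_I]
    ring_nf
    rw [Complex.I_sq]
    ring
  · refine Function.bijective_iff_has_inverse.mpr ⟨fun x => -(JW x), ?_, ?_⟩ <;>
      intro x <;> simp [hsq x]
end

section
/- Let (H,ω) be a real Hilbert space with strong symplectic form, H_ℂ its complexification with conjugation α, and H_ℂ = W⁺ ⊕ W⁻ a positive symplectic polarization. Define J_W = i(P⁺ - P⁻) with P^± the projections along the decomposition, and g_W(v,w) = ω(v, J_W α w). Then J_W and g_W restrict to H, g_W is a positive definite inner product on H_ℂ making it a Hilbert space, and (g_W, J_W, ω) is a compatible triple on H. -/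
set_option maxHeartbeats 2000000 in
/-- A positive symplectic polarization E = W⁺ ⊕ W⁻ of the complexification of a real Hilbert
space with strong symplectic form ω induces J_W = i(P⁺ - P⁻) and g_W(v,w) = ω(v, J_W(αw));
J_W commutes with α (hence restricts to H), squares to -1, g_W is Hermitian positive definite
with norm equivalent to the given one (so it makes E a Hilbert space), g_W is real on H, and
(g_W, J_W, ω) is a compatible triple on H. -/
theorem positive_symplectic_polarization_gives_compatible_triple {E : Type*}
    [NormedAddCommGroup E] [InnerProductSpace ℂ E] [CompleteSpace E]
    (α : E → E)
    (hα_add : ∀ x y, α (x + y) = α x + α y)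
    (hα_smul : ∀ (c : ℂ) (x : E), α (c • x) = (starRingEnd ℂ) c • α x)
    (hα_invol : ∀ x, α (α x) = x)
    (hα_norm : ∀ x, ‖α x‖ = ‖x‖)
    (ω : E →L[ℂ] E →L[ℂ] ℂ)
    (hω_anti : ∀ x y, ω x y = - ω y x)
    (hω_real : ∀ x y, ω (α x) (α y) = (starRingEnd ℂ) (ω x y))
    (hω_bij : Function.Bijective (fun x : E => ω x))
    (Wp Wm : Submodule ℂ E)
    (hWp_closed : IsClosed (Wp : Set E)) (hWm_closed : IsClosed (Wm : Set E))
    (hLagp : ∀ x ∈ Wp, ∀ y ∈ Wp, ω x y = 0)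
    (hLagm : ∀ x ∈ Wm, ∀ y ∈ Wm, ω x y = 0)
    (hcompl : IsCompl Wp Wm)
    (hαW : α '' (Wp : Set E) = (Wm : Set E))
    (hpos : ∀ x ∈ Wp, x ≠ 0 →
      0 < (- Complex.I * ω x (α x)).re ∧ (- Complex.I * ω x (α x)).im = 0)
    (Pp Pm : E →L[ℂ] E)
    (hPp_mem : ∀ x, Pp x ∈ Wp) (hPm_mem : ∀ x, Pm x ∈ Wm)
    (hsum : ∀ x, Pp x + Pm x = x)
    (hPp_id : ∀ x ∈ Wp, Pp x = x) (hPm_id : ∀ x ∈ Wm, Pm x = x) :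
    ∀ JW : E →L[ℂ] E, JW = Complex.I • (Pp - Pm) →
      (∀ x, JW (α x) = α (JW x)) ∧
      (∀ x, JW (JW x) = -x) ∧
      (∀ v w, ω v (JW (α w)) = (starRingEnd ℂ) (ω w (JW (α v)))) ∧
      (∀ v, v ≠ 0 → 0 < (ω v (JW (α v))).re) ∧
      (∀ v w, α v = v → α w = w → (ω v (JW (α w))).im = 0) ∧
      (∃ c C : ℝ, 0 < c ∧ 0 < C ∧
        ∀ x, c * ‖x‖ ^ 2 ≤ (ω x (JW (α x))).re ∧ (ω x (JW (α x))).re ≤ C * ‖x‖ ^ 2) := by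
  intro JW hJW
  -- basic α facts
  have hα0 : α 0 = 0 := by
    have := hα_smul 0 0; simpa using this
  have hα_neg : ∀ x, α (-x) = - α x := by
    intro x
    have := hα_smul (-1) x; simpa using this
  have hconj : ∀ x y, (starRingEnd ℂ) (ω x y) = ω (α x) (α y) := fun x y => (hω_real x y).symm
  -- α maps Wp to Wm and back
  have hαWp : ∀ x ∈ Wp, α x ∈ Wm := by
    intro x hx
    have : α x ∈ α '' (Wp : Set E) := ⟨x, hx, rfl⟩
    rwa [hαW] at this
  have hαWm : ∀ x ∈ Wm, α x ∈ Wp := by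
    intro x hx
    have hx' : x ∈ α '' (Wp : Set E) := by rw [hαW]; exact hx
    obtain ⟨u, hu, rfl⟩ := hx'
    rwa [hα_invol]
  -- projection facts
  have hPp_Wm : ∀ b ∈ Wm, Pp b = 0 := by
    intro b hb
    have h := hsum b
    rw [hPm_id b hb] at h
    have h2 : Pp b + b = 0 + b := by rw [zero_add]; exact h
    exact add_right_cancel h2
  have hPm_Wp : ∀ a ∈ Wp, Pm a = 0 := by
    intro a ha
    have h := hsum a
    rw [hPp_id a ha] at h
    have h2 : a + Pm a = a + 0 := by rw [add_zero]; exact h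
    exact add_left_cancel h2
  have hPpPm : ∀ x, Pp (Pm x) = 0 := fun x => hPp_Wm _ (hPm_mem x)
  have hPmPp : ∀ x, Pm (Pp x) = 0 := fun x => hPm_Wp _ (hPp_mem x)
  have hPpPp : ∀ x, Pp (Pp x) = Pp x := fun x => hPp_id _ (hPp_mem x)
  have hPmPm : ∀ x, Pm (Pm x) = Pm x := fun x => hPm_id _ (hPm_mem x)
  have hPpα : ∀ x, Pp (α x) = α (Pm x) := by
    intro x
    have h : α x = α (Pp x) + α (Pm x) := by rw [← hα_add, hsum]
    rw [h, map_add, hPp_Wm _ (hαWp _ (hPp_mem x)), hPp_id _ (hαWm _ (hPm_mem x)), zero_add]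
  have hPmα : ∀ x, Pm (α x) = α (Pp x) := by
    intro x
    have h : α x = α (Pp x) + α (Pm x) := by rw [← hα_add, hsum]
    rw [h, map_add, hPm_id _ (hαWp _ (hPp_mem x)), hPm_Wp _ (hαWm _ (hPm_mem x)), add_zero]
  have hJ : ∀ x, JW x = Complex.I • (Pp x - Pm x) := by
    intro x
    rw [hJW]
    simp [ContinuousLinearMap.smul_apply, ContinuousLinearMap.sub_apply]
  -- JW commutes with α
  have hJα : ∀ x, JW (α x) = α (JW x) := by
    intro x
    rw [hJ, hJ, hPpα, hPmα]
    rw [hα_smul, Complex.conj_I]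
    have : α (Pp x - Pm x) = α (Pp x) - α (Pm x) := by
      rw [sub_eq_add_neg, hα_add, hα_neg, sub_eq_add_neg]
    rw [this]
    module
  -- JW squares to -1
  have hJJ : ∀ x, JW (JW x) = -x := by
    intro x
    have h1 : Pp (JW x) = Complex.I • Pp x := by
      rw [hJ, map_smul, map_sub, hPpPp, hPpPm, sub_zero]
    have h2 : Pm (JW x) = -(Complex.I • Pm x) := by
      rw [hJ, map_smul, map_sub, hPmPp, hPmPm, zero_sub, smul_neg]
    rw [hJ (JW x), h1, h2, sub_neg_eq_add, ← smul_add, hsum, smul_smul,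
      Complex.I_mul_I, neg_one_smul]
  have hJα_expand : ∀ x, JW (α x) = Complex.I • (α (Pm x) - α (Pp x)) := by
    intro x
    rw [hJ, hPpα, hPmα]
  -- the explicit form of g
  have hgform : ∀ v w, ω v (JW (α w)) =
      Complex.I * (ω (Pm v) (α (Pm w)) - ω (Pp v) (α (Pp w))) := by
    intro v w
    rw [hJα_expand]
    rw [map_smul, map_sub, smul_eq_mul]
    conv_lhs => rw [← hsum v]
    rw [map_add, ContinuousLinearMap.add_apply, ContinuousLinearMap.add_apply]
    rw [hLagp (Pp v) (hPp_mem v) (α (Pm w)) (hαWm _ (hPm_mem w))]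
    rw [hLagm (Pm v) (hPm_mem v) (α (Pp w)) (hαWp _ (hPp_mem w))]
    ring
  -- hermitian symmetry
  have hherm : ∀ v w, ω v (JW (α w)) = (starRingEnd ℂ) (ω w (JW (α v))) := by
    intro v w
    rw [hgform v w, hgform w v]
    rw [map_mul, map_sub, Complex.conj_I]
    rw [hconj, hconj]
    simp only [hα_invol]
    rw [hω_anti (α (Pm w)) (Pm v), hω_anti (α (Pp w)) (Pp v)]
    ring
  -- diagonal is real
  have hreal : ∀ v, (ω v (JW (α v))).im = 0 := by
    intro v
    exact Complex.conj_eq_iff_im.mp (hherm v v).symm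
  -- positivity of a single term
  have hterm : ∀ u ∈ Wp, 0 ≤ (-Complex.I * ω u (α u)).re ∧
      (u ≠ 0 → 0 < (-Complex.I * ω u (α u)).re) := by
    intro u hu
    by_cases h : u = 0
    · subst h
      simp [hα0]
    · exact ⟨(hpos u hu h).1.le, fun _ => (hpos u hu h).1⟩
  -- diagonal decomposition into two nonneg terms
  have hdiag : ∀ v, (ω v (JW (α v))).re =
      (-Complex.I * ω (α (Pm v)) (α (α (Pm v)))).re + (-Complex.I * ω (Pp v) (α (Pp v))).re := by
    intro v
    have key1 : ω (Pm v) (α (Pm v)) = (starRingEnd ℂ) (ω (α (Pm v)) (α (α (Pm v)))) := by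
      rw [hconj]
      simp only [hα_invol]
    rw [hgform v v, key1]
    have h2 : Complex.I * ((starRingEnd ℂ) (ω (α (Pm v)) (α (α (Pm v)))) - ω (Pp v) (α (Pp v)))
        = (starRingEnd ℂ) (-Complex.I * ω (α (Pm v)) (α (α (Pm v))))
          + (-Complex.I * ω (Pp v) (α (Pp v))) := by
      rw [map_mul, map_neg, Complex.conj_I]
      ring
    rw [h2, Complex.add_re, Complex.conj_re]
  have hWm_comp : ∀ v, α (Pm v) ∈ Wp := fun v => hαWm _ (hPm_mem v)
  have hpos_nonneg : ∀ v, 0 ≤ (ω v (JW (α v))).re := by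
    intro v
    rw [hdiag v]
    have h1 := (hterm _ (hWm_comp v)).1
    have h2 := (hterm _ (hPp_mem v)).1
    linarith
  have hpos_pos : ∀ v, v ≠ 0 → 0 < (ω v (JW (α v))).re := by
    intro v hv
    rw [hdiag v]
    have h1 := hterm _ (hWm_comp v)
    have h2 := hterm _ (hPp_mem v)
    by_cases hp : Pp v = 0
    · have hm : Pm v ≠ 0 := by
        intro h
        exact hv (by rw [← hsum v, hp, h, add_zero])
      have hm' : α (Pm v) ≠ 0 := by
        intro h
        apply hm
        rw [← hα_invol (Pm v), h, hα0]
      have := h1.2 hm'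
      linarith [h2.1]
    · have := h2.2 hp
      linarith [h1.1]
  -- realness on H
  have hrealH : ∀ v w, α v = v → α w = w → (ω v (JW (α w))).im = 0 := by
    intro v w hv hw
    have h1 : (starRingEnd ℂ) (ω v (JW (α w))) = ω v (JW (α w)) := by
      rw [hconj, ← hJα, hα_invol, hv, hw]
    exact Complex.conj_eq_iff_im.mp h1
  -- upper bound
  have hub : ∀ x, (ω x (JW (α x))).re ≤ (‖ω‖ * ‖JW‖) * ‖x‖ ^ 2 := by
    intro x
    have h1 : (ω x (JW (α x))).re ≤ ‖ω x (JW (α x))‖ := Complex.re_le_norm _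
    have h2 : ‖ω x (JW (α x))‖ ≤ ‖ω x‖ * ‖JW (α x)‖ := (ω x).le_opNorm _
    have h3 : ‖ω x‖ ≤ ‖ω‖ * ‖x‖ := ω.le_opNorm x
    have h4 : ‖JW (α x)‖ ≤ ‖JW‖ * ‖x‖ := by
      rw [← hα_norm x]; exact JW.le_opNorm _
    nlinarith [norm_nonneg x, norm_nonneg (ω x), norm_nonneg (JW (α x)), norm_nonneg ω,
      norm_nonneg JW]
  -- Cauchy-Schwarz
  have hCS : ∀ v w, Complex.normSq (ω v (JW (α w))) ≤
      (ω v (JW (α v))).re * (ω w (JW (α w))).re := by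
    intro v w
    by_cases hw : w = 0
    · subst hw
      simp [hα0]
    · set d : ℝ := (ω w (JW (α w))).re with hd
      have hdpos : 0 < d := hpos_pos w hw
      have hd0 : (d : ℂ) ≠ 0 := Complex.ofReal_ne_zero.mpr (ne_of_gt hdpos)
      set z : ℂ := ω v (JW (α w)) with hz
      set t : ℂ := -z / (d : ℂ) with ht
      have hexp := hpos_nonneg (v + t • w)
      have hwv : ω w (JW (α v)) = (starRingEnd ℂ) z := hherm w v
      have hww : ω w (JW (α w)) = (d : ℂ) := by
        apply Complex.ext
        · simp [hd]
        · simp [hreal w]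
      have e : ω (v + t • w) (JW (α (v + t • w))) = ω v (JW (α v))
          + (starRingEnd ℂ) t * z + t * (starRingEnd ℂ) z
          + (t * (starRingEnd ℂ) t) * (d : ℂ) := by
        rw [hα_add, hα_smul, map_add, map_smul, map_add, map_add]
        simp only [ContinuousLinearMap.add_apply, ContinuousLinearMap.smul_apply,
          map_smul, smul_eq_mul]
        rw [← hz, hwv, hww]
        ring
      have e3 : ω (v + t • w) (JW (α (v + t • w))) = ω v (JW (α v))
          - ((Complex.normSq z / d : ℝ) : ℂ) := by
        rw [e, ht]
        rw [map_div₀, map_neg, Complex.conj_ofReal]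
        rw [Complex.ofReal_div]
        rw [← Complex.mul_conj z]
        field_simp
        ring
      rw [e3] at hexp
      rw [Complex.sub_re, Complex.ofReal_re] at hexp
      have h5 : Complex.normSq z / d ≤ (ω v (JW (α v))).re := by linarith
      calc Complex.normSq z = (Complex.normSq z / d) * d := by field_simp
        _ ≤ (ω v (JW (α v))).re * d := mul_le_mul_of_nonneg_right h5 hdpos.le
  -- inverse bound from open mapping
  have hker : LinearMap.ker ω = ⊥ := LinearMap.ker_eq_bot.mpr (by exact hω_bij.1)
  have hrange : LinearMap.range ω = ⊤ := LinearMap.range_eq_top.mpr (by exact hω_bij.2)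
  obtain ⟨K0, hanti⟩ : ∃ K : NNReal, AntilipschitzWith K (ω : E → (E →L[ℂ] ℂ)) :=
    ⟨_, (ContinuousLinearEquiv.ofBijective ω hker hrange).antilipschitz⟩
  set K : ℝ := (K0 : ℝ) with hK
  have hKnn : 0 ≤ K := K0.coe_nonneg
  have hKx : ∀ x, ‖x‖ ≤ K * ‖ω x‖ := fun x => ω.bound_of_antilipschitz hanti x
  -- set the upper constant
  set C : ℝ := ‖ω‖ * ‖JW‖ + 1 with hCdef
  have hCpos : 0 < C := by positivity
  have hub' : ∀ x, (ω x (JW (α x))).re ≤ C * ‖x‖ ^ 2 := by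
    intro x
    have := hub x
    nlinarith [norm_nonneg x]
  -- bound on the dual norm
  have hdual : ∀ w, ‖ω (JW (α w))‖ ≤ Real.sqrt C * Real.sqrt ((ω w (JW (α w))).re) := by
    intro w
    apply ContinuousLinearMap.opNorm_le_bound
    · positivity
    · intro v
      have h1 : ω (JW (α w)) v = - ω v (JW (α w)) := hω_anti _ _
      rw [h1, norm_neg]
      have h2 : ‖ω v (JW (α w))‖ = Real.sqrt (Complex.normSq (ω v (JW (α w)))) := by
        rw [Complex.norm_def]
      rw [h2]
      have h3 : Complex.normSq (ω v (JW (α w))) ≤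
          (C * ‖v‖ ^ 2) * (ω w (JW (α w))).re := by
        have := hCS v w
        have := hub' v
        nlinarith [hpos_nonneg w]
      calc Real.sqrt (Complex.normSq (ω v (JW (α w))))
          ≤ Real.sqrt ((C * ‖v‖ ^ 2) * (ω w (JW (α w))).re) := Real.sqrt_le_sqrt h3
        _ = Real.sqrt C * Real.sqrt ((ω w (JW (α w))).re) * ‖v‖ := by
            rw [Real.sqrt_mul (by positivity), Real.sqrt_mul hCpos.le,
              Real.sqrt_sq (norm_nonneg v)]
            ring
  -- coercivity
  set a : ℝ := ‖JW‖ * K * Real.sqrt C with ha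
  have hann : 0 ≤ a := by positivity
  have hlow : ∀ w, ‖w‖ ≤ a * Real.sqrt ((ω w (JW (α w))).re) := by
    intro w
    have h1 : ‖w‖ = ‖JW (JW (α w))‖ := by
      rw [hJJ, norm_neg, hα_norm]
    have h2 : ‖JW (JW (α w))‖ ≤ ‖JW‖ * ‖JW (α w)‖ := JW.le_opNorm _
    have h3 : ‖JW (α w)‖ ≤ K * ‖ω (JW (α w))‖ := hKx _
    have h4 := hdual w
    have hJnn : (0:ℝ) ≤ ‖JW‖ := norm_nonneg _
    calc ‖w‖ = ‖JW (JW (α w))‖ := h1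
      _ ≤ ‖JW‖ * ‖JW (α w)‖ := h2
      _ ≤ ‖JW‖ * (K * ‖ω (JW (α w))‖) :=
          mul_le_mul_of_nonneg_left h3 hJnn
      _ ≤ ‖JW‖ * (K * (Real.sqrt C * Real.sqrt ((ω w (JW (α w))).re))) :=
          mul_le_mul_of_nonneg_left (mul_le_mul_of_nonneg_left h4 hKnn) hJnn
      _ = a * Real.sqrt ((ω w (JW (α w))).re) := by rw [ha]; ring
  have hlow2 : ∀ w, ‖w‖ ^ 2 ≤ (a ^ 2 + 1) * (ω w (JW (α w))).re := by
    intro w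
    have h := hlow w
    have hs := Real.sq_sqrt (hpos_nonneg w)
    have hsn := Real.sqrt_nonneg ((ω w (JW (α w))).re)
    nlinarith [norm_nonneg w, hpos_nonneg w, mul_self_le_mul_self (norm_nonneg w) h]
  refine ⟨hJα, hJJ, hherm, hpos_pos, hrealH, ⟨1 / (a ^ 2 + 1), C, by positivity, hCpos, ?_⟩⟩
  intro x
  refine ⟨?_, hub' x⟩
  have h := hlow2 x
  rw [div_mul_eq_mul_div, div_le_iff₀ (by positivity : (0:ℝ) < a ^ 2 + 1)]
  nlinarith [hpos_nonneg x]
end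

section
/- Let H be a real Hilbert space with compatible triple (g,J,ω) and standard polarization H_ℂ = L⁺ ⊕ L⁻. Suppose W⁺ ⊂ H_ℂ is a Lagrangian subspace with H_ℂ = W⁺ ⊕ α(W⁺). Then W⁺ together with W⁻ = α(W⁺) is a positive symplectic polarization if and only if ‖P⁺x‖ > ‖P⁻x‖ for all nonzero x ∈ W⁺, where P^± are the orthogonal projections onto L^±. Moreover, in that case the restriction P⁺|_{W⁺} : W⁺ → L⁺ is a bijection. -/
/-- Let W⁺ be a Lagrangian subspace of the complexification with E = W⁺ ⊕ α(W⁺). Then W⁺ is a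
positive symplectic polarization iff ‖P⁺x‖ > ‖P⁻x‖ for all nonzero x ∈ W⁺ (P^± the orthogonal
projections onto L^± = ker(J ∓ i)); and in that case P⁺ restricts to a bijection W⁺ → L⁺.
Here ω(x,y) = g(Jx, αy) is the bilinear extension of the symplectic form, so that
-i·ω(x, αx) = -i⟪x, Jx⟫. -/
theorem positive_polarization_iff_projection_inequality {E : Type*} [NormedAddCommGroup E]
    [InnerProductSpace ℂ E] [CompleteSpace E]
    (α : E → E) (J : E →L[ℂ] E)
    (hα_add : ∀ x y, α (x + y) = α x + α y)
    (hα_smul : ∀ (c : ℂ) (x : E), α (c • x) = (starRingEnd ℂ) c • α x)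
    (hα_invol : ∀ x, α (α x) = x)
    (hα_inner : ∀ x y, (inner ℂ (α x) (α y) : ℂ) = (inner ℂ y x : ℂ))
    (hJJ : ∀ x, J (J x) = -x)
    (hJα : ∀ x, J (α x) = α (J x))
    (hJskew : ∀ x y, (inner ℂ (J x) y : ℂ) = - (inner ℂ x (J y) : ℂ))
    (Pp Pm : E →L[ℂ] E)
    (hPp_mem : ∀ x, Pp x ∈ LinearMap.ker ((J - Complex.I • (1 : E →L[ℂ] E) : E →L[ℂ] E) : E →ₗ[ℂ] E))
    (hPm_mem : ∀ x, Pm x ∈ LinearMap.ker ((J + Complex.I • (1 : E →L[ℂ] E) : E →L[ℂ] E) : E →ₗ[ℂ] E))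
    (hsum : ∀ x, Pp x + Pm x = x)
    (hPp_id : ∀ x ∈ LinearMap.ker ((J - Complex.I • (1 : E →L[ℂ] E) : E →L[ℂ] E) : E →ₗ[ℂ] E), Pp x = x)
    (hPm_id : ∀ x ∈ LinearMap.ker ((J + Complex.I • (1 : E →L[ℂ] E) : E →L[ℂ] E) : E →ₗ[ℂ] E), Pm x = x)
    (Wp : Submodule ℂ E) (hWp_closed : IsClosed (Wp : Set E))
    (hiso : ∀ x ∈ Wp, ∀ y ∈ Wp, (inner ℂ (α y) (J x) : ℂ) = 0)
    (hdecomp : ∀ z : E, ∃ x ∈ Wp, ∃ y ∈ Wp, z = x + α y)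
    (hdisj : ∀ x ∈ Wp, ∀ y ∈ Wp, x + α y = 0 → x = 0) :
    ((∀ x ∈ Wp, x ≠ 0 →
        0 < (- Complex.I * (inner ℂ x (J x) : ℂ)).re ∧
          (- Complex.I * (inner ℂ x (J x) : ℂ)).im = 0) ↔
      (∀ x ∈ Wp, x ≠ 0 → ‖Pm x‖ < ‖Pp x‖)) ∧
    ((∀ x ∈ Wp, x ≠ 0 →
        0 < (- Complex.I * (inner ℂ x (J x) : ℂ)).re ∧
          (- Complex.I * (inner ℂ x (J x) : ℂ)).im = 0) →
      Set.BijOn (⇑Pp) (Wp : Set E)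
        ((LinearMap.ker ((J - Complex.I • (1 : E →L[ℂ] E) : E →L[ℂ] E) : E →ₗ[ℂ] E) : Submodule ℂ E) : Set E)) := by
  -- membership characterizations
  have memp : ∀ x : E, x ∈ LinearMap.ker ((J - Complex.I • (1 : E →L[ℂ] E) : E →L[ℂ] E) : E →ₗ[ℂ] E) ↔
      J x = Complex.I • x := by
    intro x
    simp [LinearMap.mem_ker, ContinuousLinearMap.sub_apply, ContinuousLinearMap.smul_apply,
      sub_eq_zero]
  have memm : ∀ x : E, x ∈ LinearMap.ker ((J + Complex.I • (1 : E →L[ℂ] E) : E →L[ℂ] E) : E →ₗ[ℂ] E) ↔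
      J x = -(Complex.I • x) := by
    intro x
    simp [LinearMap.mem_ker, ContinuousLinearMap.add_apply, ContinuousLinearMap.smul_apply,
      add_eq_zero_iff_eq_neg]
  have hJp : ∀ x, J (Pp x) = Complex.I • Pp x := fun x => (memp _).1 (hPp_mem x)
  have hJm : ∀ x, J (Pm x) = -(Complex.I • Pm x) := fun x => (memm _).1 (hPm_mem x)
  -- α basics
  have hα0 : α 0 = 0 := by
    have h := hα_add 0 0
    rw [add_zero] at h
    exact (add_eq_left.mp h.symm)
  have hα_norm : ∀ v : E, ‖α v‖ = ‖v‖ := by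
    intro v
    have h := hα_inner v v
    rw [inner_self_eq_norm_sq_to_K, inner_self_eq_norm_sq_to_K] at h
    have h2 : ‖α v‖ ^ 2 = ‖v‖ ^ 2 := by exact_mod_cast h
    exact (sq_eq_sq₀ (norm_nonneg _) (norm_nonneg _)).mp h2
  have hαLp : ∀ v : E, J v = -(Complex.I • v) → J (α v) = Complex.I • α v := by
    intro v hv
    rw [hJα, hv]
    have : -(Complex.I • v) = ((-Complex.I : ℂ)) • v := by simp
    rw [this, hα_smul]
    simp
  have hαLm : ∀ v : E, J v = Complex.I • v → J (α v) = -(Complex.I • α v) := by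
    intro v hv
    rw [hJα, hv, hα_smul]
    simp
  -- projections kill the opposite eigenspace
  have hPpLm : ∀ v : E, J v = -(Complex.I • v) → Pp v = 0 := by
    intro v hv
    have h1 := hsum v
    rw [hPm_id v ((memm v).2 hv)] at h1
    exact add_eq_right.mp h1
  have hPmLp : ∀ v : E, J v = Complex.I • v → Pm v = 0 := by
    intro v hv
    have h1 := hsum v
    rw [hPp_id v ((memp v).2 hv)] at h1
    exact add_eq_left.mp h1
  have hPpα : ∀ x : E, Pp (α x) = α (Pm x) := by
    intro x
    have hx : α x = α (Pp x) + α (Pm x) := by rw [← hα_add, hsum]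
    rw [hx, map_add, hPpLm _ (hαLm _ (hJp x)), hPp_id _ ((memp _).2 (hαLp _ (hJm x))), zero_add]
  have hPmα : ∀ x : E, Pm (α x) = α (Pp x) := by
    intro x
    have hx : α x = α (Pp x) + α (Pm x) := by rw [← hα_add, hsum]
    rw [hx, map_add, hPm_id _ ((memm _).2 (hαLm _ (hJp x))), hPmLp _ (hαLp _ (hJm x)), add_zero]
  -- eigenspaces are orthogonal
  have horth : ∀ u v : E, J u = Complex.I • u → J v = -(Complex.I • v) →
      (inner ℂ u v : ℂ) = 0 := by
    intro u v hu hv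
    have h := hJskew u v
    rw [hu, hv, inner_smul_left, inner_neg_right, inner_smul_right, Complex.conj_I] at h
    have h2 : (2 * Complex.I) * (inner ℂ u v : ℂ) = 0 := by linear_combination -h
    rcases mul_eq_zero.mp h2 with h3 | h3
    · exact absurd h3 (by simp [Complex.I_ne_zero])
    · exact h3
  have horth' : ∀ u v : E, J u = -(Complex.I • u) → J v = Complex.I • v →
      (inner ℂ u v : ℂ) = 0 := by
    intro u v hu hv
    have := horth v u hv hu
    rw [← inner_conj_symm]
    simp [this]
  have hself : ∀ v : E, (inner ℂ v v : ℂ) = ((‖v‖ : ℂ)) ^ 2 := by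
    intro v
    rw [inner_self_eq_norm_sq_to_K]
    norm_cast
  -- key identity
  have hkey : ∀ x : E, (inner ℂ x (J x) : ℂ) =
      Complex.I * ((‖Pp x‖ : ℂ) ^ 2 - (‖Pm x‖ : ℂ) ^ 2) := by
    intro x
    calc (inner ℂ x (J x) : ℂ) = inner ℂ (Pp x + Pm x) (J (Pp x + Pm x)) := by rw [hsum x]
      _ = Complex.I * ((‖Pp x‖ : ℂ) ^ 2 - (‖Pm x‖ : ℂ) ^ 2) := by
          rw [map_add, hJp, hJm, inner_add_left, inner_add_right, inner_add_right,
            inner_neg_right, inner_neg_right, inner_smul_right, inner_smul_right,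
            inner_smul_right, inner_smul_right,
            horth _ _ (hJp x) (hJm x), horth' _ _ (hJm x) (hJp x),
            hself, hself]
          ring
  have hkey2 : ∀ x : E, -Complex.I * (inner ℂ x (J x) : ℂ) =
      ((‖Pp x‖ ^ 2 - ‖Pm x‖ ^ 2 : ℝ) : ℂ) := by
    intro x
    rw [hkey x]
    push_cast
    linear_combination (-(‖Pp x‖:ℂ)^2 + (‖Pm x‖:ℂ)^2) * Complex.I_sq
  have hre : ∀ x : E, (-Complex.I * (inner ℂ x (J x) : ℂ)).re = ‖Pp x‖ ^ 2 - ‖Pm x‖ ^ 2 := by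
    intro x; rw [hkey2 x, Complex.ofReal_re]
  have him : ∀ x : E, (-Complex.I * (inner ℂ x (J x) : ℂ)).im = 0 := by
    intro x; rw [hkey2 x, Complex.ofReal_im]
  -- Pythagoras
  have hpyth : ∀ x : E, ‖x‖ ^ 2 = ‖Pp x‖ ^ 2 + ‖Pm x‖ ^ 2 := by
    intro x
    have h0 : (inner ℂ (Pp x) (Pm x) : ℂ) = 0 := horth _ _ (hJp x) (hJm x)
    have h := norm_add_sq (𝕜 := ℂ) (Pp x) (Pm x)
    rw [hsum x, h0] at h
    simpa using h
  -- the equivalence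
  have hiff : (∀ x ∈ Wp, x ≠ 0 →
      0 < (- Complex.I * (inner ℂ x (J x) : ℂ)).re ∧
        (- Complex.I * (inner ℂ x (J x) : ℂ)).im = 0) ↔
      (∀ x ∈ Wp, x ≠ 0 → ‖Pm x‖ < ‖Pp x‖) := by
    constructor
    · intro h x hx hne
      have h1 := (h x hx hne).1
      rw [hre] at h1
      nlinarith [norm_nonneg (Pm x), norm_nonneg (Pp x)]
    · intro h x hx hne
      refine ⟨?_, him x⟩
      rw [hre]
      have h1 := h x hx hne
      nlinarith [norm_nonneg (Pm x)]
  refine ⟨hiff, ?_⟩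
  intro hpos
  have hlt := hiff.1 hpos
  -- injectivity from the inequality
  have hinj0 : ∀ x ∈ Wp, Pp x = 0 → x = 0 := by
    intro x hx h0
    by_contra hne
    have h := hlt x hx hne
    rw [h0, norm_zero] at h
    exact absurd h (norm_nonneg _).not_gt
  refine ⟨fun x hx => hPp_mem x, ?_, ?_⟩
  · -- InjOn
    intro x hx y hy hxy
    have hmem : x - y ∈ Wp := Wp.sub_mem hx hy
    have h0 : Pp (x - y) = 0 := by rw [map_sub, hxy, sub_self]
    have := hinj0 _ hmem h0
    exact sub_eq_zero.mp this
  · -- SurjOn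
    -- norm lower bound on Wp
    have hbound : ∀ x ∈ Wp, ‖x‖ ≤ Real.sqrt 2 * ‖Pp x‖ := by
      intro x hx
      rcases eq_or_ne x 0 with rfl | hne
      · simp
      · have h1 := hlt x hx hne
        have h2 := hpyth x
        have h3 : ‖x‖ ^ 2 ≤ 2 * ‖Pp x‖ ^ 2 := by
          nlinarith [norm_nonneg (Pm x), norm_nonneg (Pp x)]
        calc ‖x‖ = Real.sqrt (‖x‖ ^ 2) := (Real.sqrt_sq (norm_nonneg x)).symm
          _ ≤ Real.sqrt (2 * ‖Pp x‖ ^ 2) := Real.sqrt_le_sqrt h3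
          _ = Real.sqrt 2 * ‖Pp x‖ := by
              rw [Real.sqrt_mul (by norm_num), Real.sqrt_sq (norm_nonneg _)]
    haveI : CompleteSpace Wp := hWp_closed.completeSpace_coe
    set f : Wp → E := fun x => Pp (x : E) with hf
    have hanti : AntilipschitzWith ⟨Real.sqrt 2, Real.sqrt_nonneg 2⟩ f := by
      apply AntilipschitzWith.of_le_mul_dist
      intro x y
      rw [Subtype.dist_eq, dist_eq_norm, dist_eq_norm, hf]
      have : Pp (x : E) - Pp (y : E) = Pp ((x : E) - (y : E)) := (map_sub Pp _ _).symm
      rw [this]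
      exact hbound _ (Wp.sub_mem x.2 y.2)
    have hunif : UniformContinuous f :=
      Pp.uniformContinuous.comp uniformContinuous_subtype_val
    have hrange : Set.range f = Pp '' (Wp : Set E) := by
      rw [hf]
      ext u
      constructor
      · rintro ⟨x, rfl⟩; exact ⟨x, x.2, rfl⟩
      · rintro ⟨x, hx, rfl⟩; exact ⟨⟨x, hx⟩, rfl⟩
    have hclosed : IsClosed (Pp '' (Wp : Set E)) := by
      rw [← hrange]; exact hanti.isClosed_range hunif
    set R : Submodule ℂ E := Wp.map (Pp : E →ₗ[ℂ] E) with hR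
    have hRset : (R : Set E) = Pp '' (Wp : Set E) := by
      rw [hR]; rfl
    have hRclosed : IsClosed (R : Set E) := by rw [hRset]; exact hclosed
    haveI : CompleteSpace R := hRclosed.completeSpace_coe
    intro u hu
    -- u ∈ L⁺
    have hJu : J u = Complex.I • u := (memp u).1 hu
    obtain ⟨y, hyR, z, hz, huyz⟩ := R.exists_add_mem_mem_orthogonal u
    -- z ∈ L⁺
    have hRLp : ∀ r ∈ R, J r = Complex.I • r := by
      rintro r ⟨x, hx, rfl⟩
      exact hJp x
    have hJz : J z = Complex.I • z := by
      have hzu : z = u - y := by rw [huyz]; abel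
      rw [hzu, map_sub, hJu, hRLp y hyR, smul_sub]
    -- orthogonality of z to all Pp x
    have hzorth : ∀ x ∈ Wp, (inner ℂ (Pp x) z : ℂ) = 0 := by
      intro x hx
      exact (Submodule.mem_orthogonal R z).mp hz (Pp x) ⟨x, hx, rfl⟩
    -- decompose z
    obtain ⟨x₀, hx₀, y₀, hy₀, hzdec⟩ := hdecomp z
    have hPmz : Pm z = 0 := hPmLp z hJz
    -- Pm x₀ = -(α (Pp y₀))
    have hA : Pm x₀ = -(α (Pp y₀)) := by
      have h : Pm x₀ + α (Pp y₀) = 0 := by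
        rw [← hPmα y₀, ← map_add, ← hzdec, hPmz]
      exact eq_neg_of_add_eq_zero_left h
    -- from z ⊥ Pp x₀ : ⟪Pp x₀, α (Pm y₀)⟫ = -‖Pp x₀‖²
    have hB : (inner ℂ (Pp x₀) (α (Pm y₀)) : ℂ) = -((‖Pp x₀‖ : ℂ) ^ 2) := by
      have h := hzorth x₀ hx₀
      have hy0 : α y₀ = α (Pp y₀) + α (Pm y₀) := by rw [← hα_add, hsum]
      have hE : (inner ℂ (Pp x₀) x₀ : ℂ) = (‖Pp x₀‖ : ℂ) ^ 2 := by
        have h1 : (inner ℂ (Pp x₀) x₀ : ℂ) = inner ℂ (Pp x₀) (Pp x₀ + Pm x₀) := by rw [hsum x₀]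
        rw [h1, inner_add_right, horth _ _ (hJp x₀) (hJm x₀), hself, add_zero]
      rw [hzdec, hy0, inner_add_right, inner_add_right] at h
      rw [hE, horth _ _ (hJp x₀) (hαLm _ (hJp y₀))] at h
      linear_combination h
    -- Lagrangian condition gives ⟪α (Pm y₀), Pp x₀⟫ = -‖Pm x₀‖²
    have hC : (inner ℂ (α (Pm y₀)) (Pp x₀) : ℂ) = -((‖Pm x₀‖ : ℂ) ^ 2) := by
      have h := hiso x₀ hx₀ y₀ hy₀
      have hx0 : J x₀ = Complex.I • Pp x₀ - Complex.I • Pm x₀ := by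
        conv_lhs => rw [← hsum x₀]
        rw [map_add, hJp, hJm]
        abel
      have hy0 : α y₀ = α (Pp y₀) + α (Pm y₀) := by rw [← hα_add, hsum]
      rw [hx0, hy0, inner_sub_right, inner_add_left, inner_add_left,
        inner_smul_right, inner_smul_right, inner_smul_right, inner_smul_right] at h
      rw [horth _ _ (hαLp _ (hJm y₀)) (hJm x₀), horth' _ _ (hαLm _ (hJp y₀)) (hJp x₀)] at h
      rw [hA] at h
      rw [inner_neg_right] at h
      have hnrm : (inner ℂ (α (Pp y₀)) (α (Pp y₀)) : ℂ) = (‖Pm x₀‖ : ℂ) ^ 2 := by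
        rw [hself, hA, norm_neg]
      rw [hnrm] at h
      have hI : (Complex.I : ℂ) ≠ 0 := Complex.I_ne_zero
      have h2 : Complex.I * ((inner ℂ (α (Pm y₀)) (Pp x₀) : ℂ) + (‖Pm x₀‖ : ℂ) ^ 2) = 0 := by
        linear_combination h
      rcases mul_eq_zero.mp h2 with h3 | h3
      · exact absurd h3 hI
      · linear_combination h3
    -- combine: ‖Pp x₀‖ = ‖Pm x₀‖
    have hD : ‖Pp x₀‖ = ‖Pm x₀‖ := by
      have h1 : (inner ℂ (α (Pm y₀)) (Pp x₀) : ℂ) =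
          (starRingEnd ℂ) (inner ℂ (Pp x₀) (α (Pm y₀)) : ℂ) := (inner_conj_symm _ _).symm
      rw [hB, hC] at h1
      have h2 : ((‖Pm x₀‖ : ℂ)) ^ 2 = ((‖Pp x₀‖ : ℂ)) ^ 2 := by
        have := h1
        simp only [map_neg, map_pow, Complex.conj_ofReal] at this
        linear_combination -this
      have h3 : ‖Pm x₀‖ ^ 2 = ‖Pp x₀‖ ^ 2 := by exact_mod_cast h2
      exact ((sq_eq_sq₀ (norm_nonneg _) (norm_nonneg _)).mp h3).symm
    -- hence x₀ = 0
    have hx₀0 : x₀ = 0 := by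
      by_contra hne
      have := hlt x₀ hx₀ hne
      rw [hD] at this
      exact lt_irrefl _ this
    -- hence Pp y₀ = 0, so y₀ = 0, so z = 0
    have hPpy₀ : Pp y₀ = 0 := by
      have h : α (Pp y₀) = 0 := by
        have := hA
        rw [hx₀0, map_zero] at this
        have h2 : -(α (Pp y₀)) = 0 := this.symm
        exact neg_eq_zero.mp h2
      have := congrArg α h
      rw [hα_invol, hα0] at this
      exact this
    have hy₀0 : y₀ = 0 := hinj0 y₀ hy₀ hPpy₀
    have hz0 : z = 0 := by rw [hzdec, hx₀0, hy₀0, hα0, add_zero]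
    have hu' : u = y := by rw [huyz, hz0, add_zero]
    rw [hRset] at *
    obtain ⟨x, hx, hxy⟩ := hyR
    exact ⟨x, hx, by rw [hu']; exact hxy⟩
end

section
/- Let H be a real Hilbert space with compatible triple (g,J,ω), L^± = ker(J ∓ i) ⊂ H_ℂ, and Z : L⁺ → L⁻ a bounded operator. Then the graph of Z is a Lagrangian subspace of (H_ℂ, ω) if and only if Z = α Z* α, where Z* is the adjoint and α the conjugation. -/
/-- For a bounded operator Z : L⁺ → L⁻ (extended by zero to E), the graph of Z is a Lagrangian
subspace of the complexification (with ω(x,y) = g(Jx, αy)) iff Z = αZ*α. -/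
theorem graph_lagrangian_iff_symmetric {E : Type*} [NormedAddCommGroup E]
    [InnerProductSpace ℂ E] [CompleteSpace E]
    (α : E → E) (J : E →L[ℂ] E)
    (hα_add : ∀ x y, α (x + y) = α x + α y)
    (hα_smul : ∀ (c : ℂ) (x : E), α (c • x) = (starRingEnd ℂ) c • α x)
    (hα_invol : ∀ x, α (α x) = x)
    (hα_inner : ∀ x y, (inner ℂ (α x) (α y) : ℂ) = (inner ℂ y x : ℂ))
    (hJJ : ∀ x, J (J x) = -x)
    (hJα : ∀ x, J (α x) = α (J x))
    (hJskew : ∀ x y, (inner ℂ (J x) y : ℂ) = - (inner ℂ x (J y) : ℂ))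
    (Z : E →L[ℂ] E)
    (hZmem : ∀ x ∈ LinearMap.ker ((J - Complex.I • (1 : E →L[ℂ] E) : E →ₗ[ℂ] E)),
      Z x ∈ LinearMap.ker ((J + Complex.I • (1 : E →L[ℂ] E) : E →ₗ[ℂ] E)))
    (hZzero : ∀ x ∈ LinearMap.ker ((J + Complex.I • (1 : E →L[ℂ] E) : E →ₗ[ℂ] E)), Z x = 0) :
    ((∀ y₁ ∈ {y : E | ∃ x ∈ LinearMap.ker ((J - Complex.I • (1 : E →L[ℂ] E) : E →ₗ[ℂ] E)), y = x + Z x},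
        ∀ y₂ ∈ {y : E | ∃ x ∈ LinearMap.ker ((J - Complex.I • (1 : E →L[ℂ] E) : E →ₗ[ℂ] E)), y = x + Z x},
          (inner ℂ (α y₂) (J y₁) : ℂ) = 0) ∧
      (∀ z : E,
        (∀ w ∈ {y : E | ∃ x ∈ LinearMap.ker ((J - Complex.I • (1 : E →L[ℂ] E) : E →ₗ[ℂ] E)), y = x + Z x},
          (inner ℂ (α w) (J z) : ℂ) = 0) →
        z ∈ {y : E | ∃ x ∈ LinearMap.ker ((J - Complex.I • (1 : E →L[ℂ] E) : E →ₗ[ℂ] E)), y = x + Z x}))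
    ↔ (∀ x ∈ LinearMap.ker ((J - Complex.I • (1 : E →L[ℂ] E) : E →ₗ[ℂ] E)),
        Z x = α (ContinuousLinearMap.adjoint Z (α x))) := by
  have memP : ∀ x : E, x ∈ LinearMap.ker ((J - Complex.I • (1 : E →L[ℂ] E) : E →ₗ[ℂ] E)) ↔
      J x = Complex.I • x := by
    intro x
    simp [LinearMap.mem_ker, sub_eq_zero]
  have memM : ∀ x : E, x ∈ LinearMap.ker ((J + Complex.I • (1 : E →L[ℂ] E) : E →ₗ[ℂ] E)) ↔
      J x = -(Complex.I • x) := by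
    intro x
    simp [LinearMap.mem_ker, add_eq_zero_iff_eq_neg]
  -- orthogonality of L⁺ and L⁻
  have orth : ∀ x y : E, J x = Complex.I • x → J y = -(Complex.I • y) →
      (inner ℂ x y : ℂ) = 0 := by
    intro x y hx hy
    have h := hJskew x y
    rw [hx, hy, inner_smul_left, inner_neg_right, inner_smul_right] at h
    simp only [Complex.conj_I, neg_neg] at h
    have h3 : (2 * Complex.I) * (inner ℂ x y : ℂ) = 0 := by linear_combination -h
    rcases mul_eq_zero.mp h3 with h4 | h4
    · exact absurd h4 (by simp [Complex.I_ne_zero])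
    · exact h4
  have orth' : ∀ x y : E, J x = -(Complex.I • x) → J y = Complex.I • y →
      (inner ℂ x y : ℂ) = 0 := by
    intro x y hx hy
    rw [← inner_conj_symm, orth y x hy hx, map_zero]
  have hα_neg : ∀ x : E, α (-x) = -(α x) := by
    intro x
    have := hα_smul (-1) x
    simpa using this
  -- α swaps eigenspaces
  have hαP : ∀ x : E, J x = Complex.I • x → J (α x) = -(Complex.I • α x) := by
    intro x hx
    rw [hJα, hx, hα_smul]
    simp [Complex.conj_I]
  have hαM : ∀ x : E, J x = -(Complex.I • x) → J (α x) = Complex.I • α x := by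
    intro x hx
    rw [hJα, hx, hα_neg, hα_smul]
    simp [Complex.conj_I]
  -- decomposition
  have decomp : ∀ z : E, ∃ a b : E, J a = Complex.I • a ∧ J b = -(Complex.I • b) ∧
      z = a + b := by
    intro z
    refine ⟨(2⁻¹ : ℂ) • (z - Complex.I • J z), (2⁻¹ : ℂ) • (z + Complex.I • J z), ?_, ?_, ?_⟩
    · rw [map_smul, map_sub, map_smul, hJJ]
      match_scalars <;> simp [Complex.ext_iff] <;> ring
    · rw [map_smul, map_add, map_smul, hJJ]
      match_scalars <;> simp [Complex.ext_iff] <;> ring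
    · match_scalars <;> simp [Complex.ext_iff] <;> norm_num
  -- the basic expansion of the symplectic form
  have expand : ∀ u v a b : E, J u = Complex.I • u → J v = -(Complex.I • v) →
      J a = Complex.I • a → J b = -(Complex.I • b) →
      (inner ℂ (α (a + b)) (J (u + v)) : ℂ)
        = Complex.I * inner ℂ (α b) u - Complex.I * inner ℂ (α a) v := by
    intro u v a b hu hv ha hb
    rw [map_add, hu, hv, hα_add]
    simp only [inner_add_left, inner_add_right, inner_neg_right, inner_smul_right]
    rw [orth (α b) v (hαM b hb) hv, orth' (α a) u (hαP a ha) hu]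
    ring
  -- the symmetry condition
  set S : Prop := ∀ x y : E, J x = Complex.I • x → J y = Complex.I • y →
      (inner ℂ (α y) (Z x) : ℂ) = inner ℂ (α x) (Z y) with hSdef
  -- isotropy implies symmetry
  have iso_to_S :
      (∀ y₁ ∈ {y : E | ∃ x ∈ LinearMap.ker ((J - Complex.I • (1 : E →L[ℂ] E) : E →ₗ[ℂ] E)), y = x + Z x},
        ∀ y₂ ∈ {y : E | ∃ x ∈ LinearMap.ker ((J - Complex.I • (1 : E →L[ℂ] E) : E →ₗ[ℂ] E)), y = x + Z x},
          (inner ℂ (α y₂) (J y₁) : ℂ) = 0) → S := by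
    intro hiso x y hx hy
    have hx' := (memP x).mpr hx
    have hy' := (memP y).mpr hy
    have hZx := (memM (Z x)).mp (hZmem x hx')
    have hZy := (memM (Z y)).mp (hZmem y hy')
    have h0 := hiso (x + Z x) ⟨x, hx', rfl⟩ (y + Z y) ⟨y, hy', rfl⟩
    rw [expand x (Z x) y (Z y) hx hZx hy hZy] at h0
    -- h0 : I * ⟨α(Zy), x⟩ - I * ⟨αy, Zx⟩ = 0
    have key : (inner ℂ (α (Z y)) x : ℂ) = inner ℂ (α y) (Z x) := by
      have h1 : Complex.I * ((inner ℂ (α (Z y)) x : ℂ) - inner ℂ (α y) (Z x)) = 0 := by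
        linear_combination h0
      rcases mul_eq_zero.mp h1 with h2 | h2
      · exact absurd h2 Complex.I_ne_zero
      · linear_combination h2
    -- ⟨α(Zy), x⟩ = ⟨α(Zy), α(αx)⟩ = ⟨αx, Zy⟩
    calc (inner ℂ (α y) (Z x) : ℂ) = inner ℂ (α (Z y)) x := key.symm
      _ = inner ℂ (α (Z y)) (α (α x)) := by rw [hα_invol]
      _ = inner ℂ (α x) (Z y) := hα_inner _ _
  -- symmetry implies the adjoint condition
  have S_to_adj : S → ∀ x ∈ LinearMap.ker ((J - Complex.I • (1 : E →L[ℂ] E) : E →ₗ[ℂ] E)),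
      Z x = α (ContinuousLinearMap.adjoint Z (α x)) := by
    intro hS x hx
    have hx' := (memP x).mp hx
    apply ext_inner_left ℂ
    intro w
    obtain ⟨a, b, ha, hb, hw⟩ := decomp w
    subst hw
    have hZx := (memM (Z x)).mp (hZmem x ((memP x).mpr hx'))
    rw [inner_add_left, inner_add_left]
    have e1 : (inner ℂ a (Z x) : ℂ) = 0 := orth a (Z x) ha hZx
    have e2 : (inner ℂ a (α (ContinuousLinearMap.adjoint Z (α x))) : ℂ) = 0 := by
      rw [← hα_invol a, hα_inner, ContinuousLinearMap.adjoint_inner_left]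
      rw [hZzero (α a) ((memM (α a)).mpr (hαP a ha))]
      simp
    have e3 : (inner ℂ b (α (ContinuousLinearMap.adjoint Z (α x))) : ℂ) = inner ℂ b (Z x) := by
      rw [← hα_invol b, hα_inner, ContinuousLinearMap.adjoint_inner_left]
      exact (hS x (α b) hx' (hαM b hb)).symm
    rw [e1, e2, e3]
  -- adjoint condition implies symmetry
  have adj_to_S : (∀ x ∈ LinearMap.ker ((J - Complex.I • (1 : E →L[ℂ] E) : E →ₗ[ℂ] E)),
      Z x = α (ContinuousLinearMap.adjoint Z (α x))) → S := by
    intro hadj x y hx hy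
    rw [hadj x ((memP x).mpr hx), hα_inner, ContinuousLinearMap.adjoint_inner_left]
  constructor
  · rintro ⟨hiso, -⟩
    exact S_to_adj (iso_to_S hiso)
  · intro hadj
    have hS := adj_to_S hadj
    refine ⟨?_, ?_⟩
    · rintro y₁ ⟨u, hu, rfl⟩ y₂ ⟨a, ha, rfl⟩
      have hu' := (memP u).mp hu
      have ha' := (memP a).mp ha
      rw [expand u (Z u) a (Z a) hu' ((memM _).mp (hZmem u hu)) ha' ((memM _).mp (hZmem a ha))]
      have e : (inner ℂ (α (Z a)) u : ℂ) = inner ℂ (α a) (Z u) := by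
        calc (inner ℂ (α (Z a)) u : ℂ) = inner ℂ (α (Z a)) (α (α u)) := by rw [hα_invol]
          _ = inner ℂ (α u) (Z a) := hα_inner _ _
          _ = inner ℂ (α a) (Z u) := hS a u ha' hu'
      rw [e]
      ring
    · intro z hz
      obtain ⟨a, b, ha, hb, rfl⟩ := decomp z
      have key : ∀ x : E, J x = Complex.I • x → (inner ℂ (α x) (Z a - b) : ℂ) = 0 := by
        intro x hx
        have h0 := hz (x + Z x) ⟨x, (memP x).mpr hx, rfl⟩
        rw [expand a b x (Z x) ha hb hx ((memM _).mp (hZmem x ((memP x).mpr hx)))] at h0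
        have e1 : (inner ℂ (α (Z x)) a : ℂ) = inner ℂ (α x) (Z a) := by
          calc (inner ℂ (α (Z x)) a : ℂ) = inner ℂ (α (Z x)) (α (α a)) := by rw [hα_invol]
            _ = inner ℂ (α a) (Z x) := hα_inner _ _
            _ = inner ℂ (α x) (Z a) := hS x a hx ha
        rw [inner_sub_right]
        have h1 : Complex.I * ((inner ℂ (α x) (Z a) : ℂ) - inner ℂ (α x) b) = 0 := by
          linear_combination h0 - Complex.I * e1
        rcases mul_eq_zero.mp h1 with h2 | h2
        · exact absurd h2 Complex.I_ne_zero
        · linear_combination h2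
      have hZab : J (Z a - b) = -(Complex.I • (Z a - b)) := by
        rw [map_sub, ((memM _).mp (hZmem a ((memP a).mpr ha))), hb, smul_sub]
        abel
      have h3 := key (α (Z a - b)) (hαM _ hZab)
      rw [hα_invol] at h3
      have h4 : Z a - b = 0 := inner_self_eq_zero.mp h3
      exact ⟨a, (memP a).mpr ha, by rw [← sub_eq_zero.mp h4]⟩
end

section
/- Let u be a bounded symplectomorphism of H_ℂ = L⁺ ⊕ L⁻ written in block form u = [[a, αbα],[b, αaα]]. Then the block a : L⁺ → L⁺ is invertible, and u⁻¹ = [[a*, -b*],[-αb*α, αa*α]]. -/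
open ContinuousLinearMap

local notation "⟪" x ", " y "⟫" => @inner ℂ _ _ x y

/-- Auxiliary: the operator `α ∘ a ∘ α` as a continuous linear map, when `α` is an
antilinear isometry. -/
noncomputable def symplecticConjOp {E : Type*} [NormedAddCommGroup E] [InnerProductSpace ℂ E]
    (α : E → E) (hα_add : ∀ x y, α (x + y) = α x + α y)
    (hα_smul : ∀ (c : ℂ) (x : E), α (c • x) = (starRingEnd ℂ) c • α x)
    (hα_norm : ∀ x, ‖α x‖ = ‖x‖)
    (a : E →L[ℂ] E) : E →L[ℂ] E :=
  LinearMap.mkContinuous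
    { toFun := fun x => α (a (α x))
      map_add' := fun x y => by
        show α (a (α (x + y))) = α (a (α x)) + α (a (α y))
        rw [hα_add, map_add, hα_add]
      map_smul' := fun c x => by
        show α (a (α (c • x))) = c • α (a (α x))
        rw [hα_smul, map_smul, hα_smul, Complex.conj_conj] }
    ‖a‖ (fun x => by
      show ‖α (a (α x))‖ ≤ ‖a‖ * ‖x‖
      rw [hα_norm]
      calc ‖a (α x)‖ ≤ ‖a‖ * ‖α x‖ := a.le_opNorm _
        _ = ‖a‖ * ‖x‖ := by rw [hα_norm])

theorem symplecticConjOp_apply {E : Type*} [NormedAddCommGroup E] [InnerProductSpace ℂ E]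
    (α : E → E) (hα_add : ∀ x y, α (x + y) = α x + α y)
    (hα_smul : ∀ (c : ℂ) (x : E), α (c • x) = (starRingEnd ℂ) c • α x)
    (hα_norm : ∀ x, ‖α x‖ = ‖x‖)
    (a : E →L[ℂ] E) (x : E) :
    symplecticConjOp α hα_add hα_smul hα_norm a x = α (a (α x)) := rfl

set_option maxHeartbeats 2000000 in
/-- For a bounded symplectomorphism u of the complexification, with block form
u = [[a, αbα],[b, αaα]] relative to E = L⁺ ⊕ L⁻, the block a is invertible (a bijection of L⁺)
and u⁻¹ = [[a*, -b*],[-αb*α, αa*α]]. Here ω(x,y) = g(Jx, αy), and a, b are encoded as the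
operators on E which vanish on L⁻ and give the two components of u on L⁺. -/
theorem symplectomorphism_block_inverse {E : Type*} [NormedAddCommGroup E]
    [InnerProductSpace ℂ E] [CompleteSpace E]
    (α : E → E) (J : E →L[ℂ] E)
    (hα_add : ∀ x y, α (x + y) = α x + α y)
    (hα_smul : ∀ (c : ℂ) (x : E), α (c • x) = (starRingEnd ℂ) c • α x)
    (hα_invol : ∀ x, α (α x) = x)
    (hα_inner : ∀ x y, (inner ℂ (α x) (α y) : ℂ) = (inner ℂ y x : ℂ))
    (hJJ : ∀ x, J (J x) = -x)
    (hJα : ∀ x, J (α x) = α (J x))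
    (hJskew : ∀ x y, (inner ℂ (J x) y : ℂ) = - (inner ℂ x (J y) : ℂ))
    (u u' a b : E →L[ℂ] E)
    (hu_symp : ∀ x y, (inner ℂ (α (u y)) (J (u x)) : ℂ) = (inner ℂ (α y) (J x) : ℂ))
    (hu_α : ∀ x, u (α x) = α (u x))
    (huu' : ∀ x, u' (u x) = x) (hu'u : ∀ x, u (u' x) = x)
    (ha_mem : ∀ x ∈ LinearMap.ker (((J - Complex.I • (1 : E →L[ℂ] E) : E →L[ℂ] E) : E →ₗ[ℂ] E)),
      a x ∈ LinearMap.ker (((J - Complex.I • (1 : E →L[ℂ] E) : E →L[ℂ] E) : E →ₗ[ℂ] E)))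
    (ha_zero : ∀ x ∈ LinearMap.ker (((J + Complex.I • (1 : E →L[ℂ] E) : E →L[ℂ] E) : E →ₗ[ℂ] E)), a x = 0)
    (hb_mem : ∀ x ∈ LinearMap.ker (((J - Complex.I • (1 : E →L[ℂ] E) : E →L[ℂ] E) : E →ₗ[ℂ] E)),
      b x ∈ LinearMap.ker (((J + Complex.I • (1 : E →L[ℂ] E) : E →L[ℂ] E) : E →ₗ[ℂ] E)))
    (hb_zero : ∀ x ∈ LinearMap.ker (((J + Complex.I • (1 : E →L[ℂ] E) : E →L[ℂ] E) : E →ₗ[ℂ] E)), b x = 0)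
    (hblock : ∀ x ∈ LinearMap.ker (((J - Complex.I • (1 : E →L[ℂ] E) : E →L[ℂ] E) : E →ₗ[ℂ] E)), u x = a x + b x) :
    Set.BijOn (⇑a)
      ((LinearMap.ker (((J - Complex.I • (1 : E →L[ℂ] E) : E →L[ℂ] E) : E →ₗ[ℂ] E)) : Submodule ℂ E) : Set E)
      ((LinearMap.ker (((J - Complex.I • (1 : E →L[ℂ] E) : E →L[ℂ] E) : E →ₗ[ℂ] E)) : Submodule ℂ E) : Set E) ∧
    (∀ x ∈ LinearMap.ker (((J - Complex.I • (1 : E →L[ℂ] E) : E →L[ℂ] E) : E →ₗ[ℂ] E)),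
      u' x = ContinuousLinearMap.adjoint a x - α (ContinuousLinearMap.adjoint b (α x))) ∧
    (∀ y ∈ LinearMap.ker (((J + Complex.I • (1 : E →L[ℂ] E) : E →L[ℂ] E) : E →ₗ[ℂ] E)),
      u' y = α (ContinuousLinearMap.adjoint a (α y)) - ContinuousLinearMap.adjoint b y) := by
  classical
  set K : Submodule ℂ E := LinearMap.ker (((J - Complex.I • (1 : E →L[ℂ] E) : E →L[ℂ] E) : E →ₗ[ℂ] E)) with hKdef
  set K' : Submodule ℂ E := LinearMap.ker (((J + Complex.I • (1 : E →L[ℂ] E) : E →L[ℂ] E) : E →ₗ[ℂ] E)) with hK'def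
  -- membership criteria
  have memp : ∀ x : E, x ∈ K ↔ J x = Complex.I • x := by
    intro x
    rw [hKdef, LinearMap.mem_ker]
    simp only [ContinuousLinearMap.coe_coe, ContinuousLinearMap.coe_sub', Pi.sub_apply, ContinuousLinearMap.smul_apply,
      ContinuousLinearMap.one_apply, sub_eq_zero]
  have memm : ∀ x : E, x ∈ K' ↔ J x = -(Complex.I • x) := by
    intro x
    rw [hK'def, LinearMap.mem_ker]
    simp only [ContinuousLinearMap.coe_coe, ContinuousLinearMap.coe_add', Pi.add_apply, ContinuousLinearMap.smul_apply,
      ContinuousLinearMap.one_apply, add_eq_zero_iff_eq_neg]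
  clear_value K K'
  -- basic α facts
  have hα0 : α 0 = 0 := by
    have h := hα_smul 0 0; simpa using h
  have hαneg : ∀ x, α (-x) = - α x := by
    intro x; have h := hα_smul (-1) x; simpa using h
  have hαsub : ∀ x y, α (x - y) = α x - α y := by
    intro x y; rw [sub_eq_add_neg, hα_add, hαneg, sub_eq_add_neg]
  have hαI : ∀ x, α (Complex.I • x) = -(Complex.I • α x) := by
    intro x; rw [hα_smul]; simp [Complex.conj_I, neg_smul]
  have hαI' : ∀ x, α (Complex.I • x) = (-Complex.I) • α x := by
    intro x; rw [hα_smul]; simp [Complex.conj_I]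
  have hsym : ∀ v w : E, ⟪α v, w⟫ = ⟪α w, v⟫ := by
    intro v w
    conv_lhs => rw [← hα_invol w]
    rw [hα_inner]
  have hαnorm : ∀ x, ‖α x‖ = ‖x‖ := by
    intro x
    have h := hα_inner x x
    rw [inner_self_eq_norm_sq_to_K, inner_self_eq_norm_sq_to_K] at h
    have h2 : (‖α x‖ : ℝ) ^ 2 = (‖x‖ : ℝ) ^ 2 := by exact_mod_cast h
    nlinarith [norm_nonneg (α x), norm_nonneg x]
  -- α exchanges K and K'
  have hαK : ∀ x ∈ K, α x ∈ K' := by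
    intro x hx
    rw [memm, hJα, (memp x).1 hx, hαI]
  have hαK' : ∀ x ∈ K', α x ∈ K := by
    intro x hx
    rw [memp, hJα, (memm x).1 hx, hαneg, hαI, neg_neg]
  -- orthogonality of K and K'
  have horth : ∀ p ∈ K, ∀ m ∈ K', ⟪p, m⟫ = 0 := by
    intro p hp m hm
    have h1 := hJskew p m
    rw [(memp p).1 hp, (memm m).1 hm, inner_smul_left, inner_neg_right,
      inner_smul_right, Complex.conj_I] at h1
    have h2 : (2 * Complex.I) * ⟪p, m⟫ = 0 := by linear_combination -h1
    have h3 : (2 * Complex.I : ℂ) ≠ 0 := by simp [Complex.I_ne_zero]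
    exact (mul_eq_zero.1 h2).resolve_left h3
  have horth' : ∀ m ∈ K', ∀ p ∈ K, ⟪m, p⟫ = 0 := by
    intro m hm p hp
    rw [← inner_conj_symm, horth p hp m hm, map_zero]
  -- K ∩ K' = 0
  have hpm0 : ∀ x : E, x ∈ K → x ∈ K' → x = 0 := by
    intro x hx hx'
    have h1 := ((memp x).1 hx).symm.trans ((memm x).1 hx')
    have h2 : (2 * Complex.I) • x = 0 := by
      rw [two_mul, add_smul]
      rw [eq_neg_iff_add_eq_zero] at h1
      exact h1
    have h3 : (2 * Complex.I : ℂ) ≠ 0 := by simp [Complex.I_ne_zero]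
    exact (smul_eq_zero.1 h2).resolve_left h3
  -- decomposition E = K ⊕ K'
  have hIIsmul : ∀ v : E, Complex.I • Complex.I • v = -v := by
    intro v; rw [smul_smul, Complex.I_mul_I, neg_one_smul]
  have hdec : ∀ w : E, ∃ p m : E, p ∈ K ∧ m ∈ K' ∧ w = p + m := by
    intro w
    refine ⟨(1/2 : ℂ) • (w - Complex.I • J w), (1/2 : ℂ) • (w + Complex.I • J w), ?_, ?_, ?_⟩
    · rw [memp, map_smul, map_sub, map_smul, hJJ, smul_comm (Complex.I) ((1:ℂ)/2),
        smul_sub Complex.I w, hIIsmul]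
      congr 1
      rw [smul_neg, sub_neg_eq_add, sub_neg_eq_add, add_comm]
    · rw [memm, map_smul, map_add, map_smul, hJJ]
      rw [show -(Complex.I • ((1/2 : ℂ) • (w + Complex.I • J w)))
          = (1/2 : ℂ) • -(Complex.I • w + Complex.I • Complex.I • J w) by
        rw [smul_comm (Complex.I) ((1:ℂ)/2), smul_add, smul_neg]]
      rw [hIIsmul]
      congr 1
      rw [smul_neg, neg_add, neg_neg, add_comm]
    · rw [← smul_add]
      have : w - Complex.I • J w + (w + Complex.I • J w) = (2 : ℂ) • w := by
        rw [two_smul]; abel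
      rw [this, smul_smul]
      norm_num
  -- a and b map everything into K resp. K'
  have hamem : ∀ w : E, a w ∈ K := by
    intro w
    obtain ⟨p, m, hp, hm, rfl⟩ := hdec w
    rw [map_add, ha_zero m hm, add_zero]
    exact ha_mem p hp
  have hbmem : ∀ w : E, b w ∈ K' := by
    intro w
    obtain ⟨p, m, hp, hm, rfl⟩ := hdec w
    rw [map_add, hb_zero m hm, add_zero]
    exact hb_mem p hp
  -- criteria for membership via orthogonality
  have hKof : ∀ v : E, (∀ m ∈ K', ⟪m, v⟫ = 0) → v ∈ K := by
    intro v hv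
    obtain ⟨p, m, hp, hm, hw⟩ := hdec v
    have h0 := hv m hm
    rw [hw, inner_add_right, horth' m hm p hp, zero_add, inner_self_eq_zero] at h0
    rw [hw, h0, add_zero]
    exact hp
  have hK'of : ∀ v : E, (∀ p ∈ K, ⟪p, v⟫ = 0) → v ∈ K' := by
    intro v hv
    obtain ⟨p, m, hp, hm, hw⟩ := hdec v
    have h0 := hv p hp
    rw [hw, inner_add_right, horth p hp m hm, add_zero, inner_self_eq_zero] at h0
    rw [hw, h0, zero_add]
    exact hm
  -- adjoints of a and b : mapping properties
  have ha'0 : ∀ z ∈ K', adjoint a z = 0 := by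
    intro z hz
    refine ext_inner_right ℂ fun w => ?_
    rw [adjoint_inner_left, inner_zero_left, horth' z hz (a w) (hamem w)]
  have hb'0 : ∀ z ∈ K, adjoint b z = 0 := by
    intro z hz
    refine ext_inner_right ℂ fun w => ?_
    rw [adjoint_inner_left, inner_zero_left, horth z hz (b w) (hbmem w)]
  have ha'mem : ∀ z ∈ K, adjoint a z ∈ K := by
    intro z hz
    refine hKof _ fun m hm => ?_
    rw [adjoint_inner_right, ha_zero m hm, inner_zero_left]
  have hb'mem : ∀ z ∈ K', adjoint b z ∈ K := by
    intro z hz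
    refine hKof _ fun m hm => ?_
    rw [adjoint_inner_right, hb_zero m hm, inner_zero_left]
  -- u on K'
  have humem' : ∀ y ∈ K', u y = α (a (α y)) + α (b (α y)) := by
    intro y hy
    have h1 : u y = α (u (α y)) := by rw [← hu_α, hα_invol]
    rw [h1, hblock (α y) (hαK' y hy), hα_add]
  -- the fundamental symplectic relation : u† ∘ (α J) ∘ u = α J
  have hrel : ∀ x, adjoint u (α (J (u x))) = α (J x) := by
    intro x
    refine ext_inner_right ℂ fun y => ?_
    rw [adjoint_inner_left, hsym (J (u x)) (u y), hu_symp x y, hsym y (J x)]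
  have hαJαJ : ∀ v, α (J (α (J v))) = -v := by
    intro v; rw [hJα, hα_invol, hJJ]
  have hu'f : ∀ z, u' z = -α (J (adjoint u (α (J z)))) := by
    intro z
    have h := hrel (u' z)
    rw [hu'u] at h
    rw [h, hαJαJ, neg_neg]
  -- the adjoint of u on K and K'
  have hu'adjK : ∀ z ∈ K, adjoint u z = adjoint a z + α (adjoint b (α z)) := by
    intro z hz
    refine ext_inner_right ℂ fun w => ?_
    obtain ⟨p, m, hp, hm, rfl⟩ := hdec w
    rw [adjoint_inner_left, u.map_add, hblock p hp, humem' m hm]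
    simp only [inner_add_right, inner_add_left]
    have e1 : ⟪z, b p⟫ = 0 := horth z hz (b p) (hbmem p)
    have e2 : ⟪z, α (a (α m))⟫ = 0 :=
      horth z hz _ (hαK _ (hamem (α m)))
    have e3 : ⟪adjoint a z, p⟫ = ⟪z, a p⟫ := adjoint_inner_left a p z
    have e4 : ⟪α (adjoint b (α z)), p⟫ = 0 :=
      horth' _ (hαK _ (hb'mem (α z) (hαK z hz))) p hp
    have e5 : ⟪adjoint a z, m⟫ = 0 := horth _ (ha'mem z hz) m hm
    have e6 : ⟪α (adjoint b (α z)), m⟫ = ⟪z, α (b (α m))⟫ := by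
      rw [hsym (adjoint b (α z)) m, adjoint_inner_right]
      conv_lhs => rw [← hα_invol (b (α m))]
      rw [hα_inner]
    rw [e1, e2, e3, e4, e5, e6]
    try ring
  have hu'adjK' : ∀ z ∈ K', adjoint u z = adjoint b z + α (adjoint a (α z)) := by
    intro z hz
    refine ext_inner_right ℂ fun w => ?_
    obtain ⟨p, m, hp, hm, rfl⟩ := hdec w
    rw [adjoint_inner_left, u.map_add, hblock p hp, humem' m hm]
    simp only [inner_add_right, inner_add_left]
    have e1 : ⟪z, a p⟫ = 0 := horth' z hz (a p) (hamem p)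
    have e2 : ⟪z, α (b (α m))⟫ = 0 :=
      horth' z hz _ (hαK' _ (hbmem (α m)))
    have e3 : ⟪adjoint b z, p⟫ = ⟪z, b p⟫ := adjoint_inner_left b p z
    have e4 : ⟪α (adjoint a (α z)), p⟫ = 0 :=
      horth' _ (hαK _ (ha'mem (α z) (hαK' z hz))) p hp
    have e5 : ⟪adjoint b z, m⟫ = 0 := horth _ (hb'mem z hz) m hm
    have e6 : ⟪α (adjoint a (α z)), m⟫ = ⟪z, α (a (α m))⟫ := by
      rw [hsym (adjoint a (α z)) m, adjoint_inner_right]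
      conv_lhs => rw [← hα_invol (a (α m))]
      rw [hα_inner]
    rw [e1, e2, e3, e4, e5, e6]
    try ring
  -- the formulas for u' on K and K'
  have hu'K : ∀ x ∈ K, u' x = adjoint a x - α (adjoint b (α x)) := by
    intro x hx
    have s1 : α (J x) = (-Complex.I) • α x := by rw [(memp x).1 hx, hαI']
    have s3 : adjoint u (α x) = adjoint b (α x) + α (adjoint a x) := by
      rw [hu'adjK' (α x) (hαK x hx), hα_invol]
    have s4 : adjoint u (α (J x))
        = (-Complex.I) • (adjoint b (α x) + α (adjoint a x)) := by
      have hms := ContinuousLinearMap.map_smul (ContinuousLinearMap.adjoint u)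
        (-Complex.I) (α x)
      rw [s1, hms, s3]
    have s5 : J (adjoint b (α x)) = Complex.I • adjoint b (α x) :=
      (memp _).1 (hb'mem (α x) (hαK x hx))
    have s6 : J (α (adjoint a x)) = -(Complex.I • α (adjoint a x)) :=
      (memm _).1 (hαK _ (ha'mem x hx))
    have s7 : J (adjoint u (α (J x))) = adjoint b (α x) - α (adjoint a x) := by
      rw [s4, J.map_smul, J.map_add, s5, s6]
      simp only [smul_add, smul_neg, smul_smul, neg_mul, Complex.I_mul_I, neg_neg, one_smul]
      module
    rw [hu'f x, s7, hαsub, hα_invol, neg_sub]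
  have hu'K' : ∀ y ∈ K', u' y = α (adjoint a (α y)) - adjoint b y := by
    intro y hy
    have s1 : α (J y) = Complex.I • α y := by
      rw [(memm y).1 hy, hαneg, hαI, neg_neg]
    have s3 : adjoint u (α y) = adjoint a (α y) + α (adjoint b y) := by
      rw [hu'adjK (α y) (hαK' y hy), hα_invol]
    have s4 : adjoint u (α (J y))
        = Complex.I • (adjoint a (α y) + α (adjoint b y)) := by
      have hms := ContinuousLinearMap.map_smul (ContinuousLinearMap.adjoint u)
        Complex.I (α y)
      rw [s1, hms, s3]
    have s5 : J (adjoint a (α y)) = Complex.I • adjoint a (α y) :=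
      (memp _).1 (ha'mem (α y) (hαK' y hy))
    have s6 : J (α (adjoint b y)) = -(Complex.I • α (adjoint b y)) :=
      (memm _).1 (hαK _ (hb'mem y hy))
    have s7 : J (adjoint u (α (J y))) = α (adjoint b y) - adjoint a (α y) := by
      rw [s4, J.map_smul, J.map_add, s5, s6]
      simp only [smul_add, smul_neg, smul_smul, neg_mul, Complex.I_mul_I, neg_neg, one_smul]
      module
    rw [hu'f y, s7, hαsub, hα_invol, neg_sub]
  -- the relation a†a - b†b = 1 on K
  have hrel1 : ∀ x ∈ K, adjoint a (a x) - adjoint b (b x) = x := by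
    intro x hx
    have h := huu' x
    rw [hblock x hx, u'.map_add, hu'K _ (ha_mem x hx), hu'K' _ (hb_mem x hx)] at h
    set A1 := adjoint a (a x) with hA1
    set B1 := α (adjoint b (α (a x))) with hB1
    set C1 := α (adjoint a (α (b x))) with hC1
    set D1 := adjoint b (b x) with hD1
    have h2 : A1 - D1 - x = B1 - C1 := by rw [← h]; abel
    have hleft : A1 - D1 - x ∈ K :=
      sub_mem (sub_mem (ha'mem _ (ha_mem x hx)) (hb'mem _ (hb_mem x hx))) hx
    have hright : A1 - D1 - x ∈ K' := by
      rw [h2]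
      exact sub_mem (hαK _ (hb'mem _ (hαK _ (ha_mem x hx))))
        (hαK _ (ha'mem _ (hαK' _ (hb_mem x hx))))
    have h0 := hpm0 _ hleft hright
    rw [sub_eq_zero] at h0
    exact h0
  -- the relation a a† - αbb†α = 1 on K
  have hrel2 : ∀ z ∈ K, a (adjoint a z) - α (b (adjoint b (α z))) = z := by
    intro z hz
    have h := hu'u z
    rw [hu'K z hz, u.map_sub, hblock _ (ha'mem z hz), hu_α,
      hblock _ (hb'mem (α z) (hαK z hz)), hα_add] at h
    set A1 := a (adjoint a z) with hA1
    set B1 := b (adjoint a z) with hB1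
    set C1 := α (a (adjoint b (α z))) with hC1
    set D1 := α (b (adjoint b (α z))) with hD1
    have h2 : A1 - D1 - z = C1 - B1 := by rw [← h]; abel
    have hleft : A1 - D1 - z ∈ K :=
      sub_mem (sub_mem (hamem _) (hαK' _ (hbmem _))) hz
    have hright : A1 - D1 - z ∈ K' := by
      rw [h2]
      exact sub_mem (hαK _ (hamem _)) (hbmem _)
    have h0 := hpm0 _ hleft hright
    rw [sub_eq_zero] at h0
    exact h0
  -- norm identities
  have hna : ∀ x ∈ K, ‖x‖ ^ 2 + ‖b x‖ ^ 2 = ‖a x‖ ^ 2 := by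
    intro x hx
    have h : ⟪adjoint a (a x), x⟫ - ⟪adjoint b (b x), x⟫ = ⟪x, x⟫ := by
      rw [← inner_sub_left, hrel1 x hx]
    rw [adjoint_inner_left, adjoint_inner_left, inner_self_eq_norm_sq_to_K,
      inner_self_eq_norm_sq_to_K, inner_self_eq_norm_sq_to_K] at h
    have h2 : (‖a x‖ : ℝ) ^ 2 - ‖b x‖ ^ 2 = ‖x‖ ^ 2 := by exact_mod_cast h
    linarith
  have hna' : ∀ z ∈ K, ‖z‖ ^ 2 + ‖adjoint b (α z)‖ ^ 2 = ‖adjoint a z‖ ^ 2 := by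
    intro z hz
    have h : ⟪a (adjoint a z), z⟫ - ⟪α (b (adjoint b (α z))), z⟫ = ⟪z, z⟫ := by
      rw [← inner_sub_left, hrel2 z hz]
    have e1 : ⟪a (adjoint a z), z⟫ = ⟪adjoint a z, adjoint a z⟫ := by
      rw [adjoint_inner_right]
    have e2 : ⟪α (b (adjoint b (α z))), z⟫ = ⟪adjoint b (α z), adjoint b (α z)⟫ := by
      rw [hsym _ z, ← adjoint_inner_left]
    rw [e1, e2, inner_self_eq_norm_sq_to_K, inner_self_eq_norm_sq_to_K,
      inner_self_eq_norm_sq_to_K] at h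
    have h2 : (‖adjoint a z‖ : ℝ) ^ 2 - ‖adjoint b (α z)‖ ^ 2 = ‖z‖ ^ 2 := by exact_mod_cast h
    linarith
  -- Pythagoras
  have hpyth : ∀ v w : E, ⟪v, w⟫ = 0 → ‖v + w‖ ^ 2 = ‖v‖ ^ 2 + ‖w‖ ^ 2 := by
    intro v w hvw
    rw [@norm_add_sq ℂ _ _ _ _ v w, hvw]
    simp
  -- the operator c = a + α a α and its surjectivity
  set A : E →L[ℂ] E := symplecticConjOp α hα_add hα_smul hαnorm a with hAdef
  have hA_apply : ∀ x, A x = α (a (α x)) := fun x => rfl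
  set c : E →L[ℂ] E := a + A with hcdef
  have hc_apply : ∀ x, c x = a x + α (a (α x)) := fun x => rfl
  have hcdecomp : ∀ p ∈ K, ∀ m ∈ K', c (p + m) = a p + α (a (α m)) := by
    intro p hp m hm
    rw [hc_apply, map_add, ha_zero m hm, add_zero, hα_add, map_add,
      ha_zero (α p) (hαK p hp), zero_add]
  have hclow : ∀ w : E, ‖w‖ ≤ ‖c w‖ := by
    intro w
    obtain ⟨p, m, hp, hm, rfl⟩ := hdec w
    rw [hcdecomp p hp m hm]
    have h1 : ‖a p + α (a (α m))‖ ^ 2 = ‖a p‖ ^ 2 + ‖α (a (α m))‖ ^ 2 :=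
      hpyth _ _ (horth _ (ha_mem p hp) _ (hαK _ (ha_mem _ (hαK' m hm))))
    have h2 : ‖p + m‖ ^ 2 = ‖p‖ ^ 2 + ‖m‖ ^ 2 := hpyth p m (horth p hp m hm)
    have h3 := hna p hp
    have h4 := hna (α m) (hαK' m hm)
    rw [hαnorm] at h4
    have h5 : ‖α (a (α m))‖ = ‖a (α m)‖ := hαnorm _
    rw [h5] at h1
    have hsq : ‖p + m‖ ^ 2 ≤ ‖a p + α (a (α m))‖ ^ 2 := by
      nlinarith [sq_nonneg ‖b p‖, sq_nonneg ‖b (α m)‖]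
    nlinarith [norm_nonneg (p + m), norm_nonneg (a p + α (a (α m))), hsq]
  have hanti : AntilipschitzWith 1 ⇑c :=
    c.antilipschitz_of_bound (fun x => by simpa using hclow x)
  have hclosed : IsClosed (Set.range ⇑c) :=
    hanti.isClosed_range c.uniformContinuous
  have hRclosed : IsClosed ((LinearMap.range (c : E →ₗ[ℂ] E) : Submodule ℂ E) : Set E) := by
    rwa [LinearMap.coe_range]
  haveI : CompleteSpace (LinearMap.range (c : E →ₗ[ℂ] E) : Submodule ℂ E) :=
    hRclosed.completeSpace_coe
  have hdual : ∀ w v : E, ⟪c w, v⟫ = ⟪w, adjoint a v + α (adjoint a (α v))⟫ := by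
    intro w v
    rw [hc_apply, inner_add_left, inner_add_right]
    congr 1
    · rw [adjoint_inner_right]
    · rw [hsym (a (α w)) v]
      have : ⟪w, α (adjoint a (α v))⟫ = ⟪adjoint a (α v), α w⟫ := by
        conv_lhs => rw [← hα_invol w]
        rw [hα_inner]
      rw [this, adjoint_inner_left]
  have hdlow : ∀ v : E, ‖v‖ ≤ ‖adjoint a v + α (adjoint a (α v))‖ := by
    intro v
    obtain ⟨p, m, hp, hm, rfl⟩ := hdec v
    have hd : adjoint a (p + m) + α (adjoint a (α (p + m)))
        = adjoint a p + α (adjoint a (α m)) := by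
      rw [map_add, ha'0 m hm, add_zero, hα_add, map_add, ha'0 (α p) (hαK p hp),
        zero_add]
    rw [hd]
    have h1 : ‖adjoint a p + α (adjoint a (α m))‖ ^ 2
        = ‖adjoint a p‖ ^ 2 + ‖α (adjoint a (α m))‖ ^ 2 :=
      hpyth _ _ (horth _ (ha'mem p hp) _ (hαK _ (ha'mem _ (hαK' m hm))))
    have h2 : ‖p + m‖ ^ 2 = ‖p‖ ^ 2 + ‖m‖ ^ 2 := hpyth p m (horth p hp m hm)
    have h3 := hna' p hp
    have h4 := hna' (α m) (hαK' m hm)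
    rw [hαnorm] at h4
    have h5 : ‖α (adjoint a (α m))‖ = ‖adjoint a (α m)‖ := hαnorm _
    rw [h5] at h1
    have hsq : ‖p + m‖ ^ 2 ≤ ‖adjoint a p + α (adjoint a (α m))‖ ^ 2 := by
      nlinarith [sq_nonneg ‖adjoint b (α p)‖, sq_nonneg ‖adjoint b (α (α m))‖]
    nlinarith [norm_nonneg (p + m), norm_nonneg (adjoint a p + α (adjoint a (α m))), hsq]
  have hdense : (LinearMap.range (c : E →ₗ[ℂ] E) : Submodule ℂ E)ᗮ = ⊥ := by
    rw [Submodule.eq_bot_iff]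
    intro y hy
    have hcy : ∀ w : E, ⟪c w, y⟫ = 0 := fun w =>
      (Submodule.mem_orthogonal _ y).1 hy (c w) (LinearMap.mem_range_self _ w)
    have h0 : ⟪adjoint a y + α (adjoint a (α y)), adjoint a y + α (adjoint a (α y))⟫ = 0 := by
      rw [← hdual, hcy]
    rw [inner_self_eq_zero] at h0
    have h1 := hdlow y
    rw [h0, norm_zero] at h1
    exact norm_le_zero_iff.1 h1
  have hRtop : LinearMap.range (c : E →ₗ[ℂ] E) = ⊤ := Submodule.orthogonal_eq_bot_iff.1 hdense
  have hcsurj : ∀ z : E, ∃ w : E, c w = z := fun z =>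
    LinearMap.range_eq_top.1 hRtop z
  -- surjectivity of a : K → K
  have hsurj : ∀ z ∈ K, ∃ p ∈ K, a p = z := by
    intro z hz
    obtain ⟨w, hw⟩ := hcsurj z
    obtain ⟨p, m, hp, hm, rfl⟩ := hdec w
    rw [hcdecomp p hp m hm] at hw
    have hq : α (a (α m)) = z - a p := by rw [← hw]; abel
    have hqK : α (a (α m)) ∈ K := by
      rw [hq]; exact sub_mem hz (ha_mem p hp)
    have hqK' : α (a (α m)) ∈ K' := hαK _ (ha_mem _ (hαK' m hm))
    have hq0 := hpm0 _ hqK hqK'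
    refine ⟨p, hp, ?_⟩
    rw [hq0] at hq
    rw [eq_comm, ← sub_eq_zero]
    exact hq.symm ▸ rfl
  -- injectivity of a on K
  have hinj : ∀ x ∈ K, a x = 0 → x = 0 := by
    intro x hx hax
    have h := hna x hx
    rw [hax, norm_zero] at h
    have h2 : ‖x‖ ^ 2 = 0 := by nlinarith [sq_nonneg ‖b x‖]
    have h3 : ‖x‖ = 0 := by nlinarith [norm_nonneg x]
    exact norm_eq_zero.1 h3
  refine ⟨⟨?_, ?_, ?_⟩, hu'K, hu'K'⟩
  · intro x hx
    exact ha_mem x hx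
  · intro x hx y hy hxy
    have hsub : a (x - y) = 0 := by rw [map_sub, hxy, sub_self]
    have h := hinj (x - y) (sub_mem hx hy) hsub
    exact sub_eq_zero.1 h
  · intro z hz
    obtain ⟨p, hp, hap⟩ := hsurj z hz
    exact ⟨p, hp, hap⟩
end

section
/- Let u ∈ Sp(H) with block decomposition [[a, αbα],[b, αaα]]. The following are equivalent: (1) the projection of u(L⁺) onto L⁻ = α(L⁺) along the decomposition u(L⁺) ⊕ u(L⁻) restricted to L⁺ is Hilbert–Schmidt (u is in the restricted symplectic group); (2) b is Hilbert–Schmidt; (3) u⁻¹Ju - J is Hilbert–Schmidt. Moreover u⁻¹Ju - J = 2i·[[b*b, b*αaα],[-αb*αa, -αb*bα]]. -/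
open scoped ComplexInnerProductSpace
set_option linter.unusedSectionVars false

def IsHilbertSchmidt {E F : Type} [NormedAddCommGroup E] [InnerProductSpace ℂ E]
    [NormedAddCommGroup F] [InnerProductSpace ℂ F] (T : E →L[ℂ] F) : Prop :=
  ∃ (ι : Type) (b : HilbertBasis ι ℂ E), Summable fun i => ‖T (b i)‖ ^ 2

section aux
variable {E : Type} [NormedAddCommGroup E] [InnerProductSpace ℂ E] [CompleteSpace E]

lemma my_parseval {ι : Type} (e : HilbertBasis ι ℂ E) (x : E) :
    HasSum (fun i => ‖(inner ℂ (e i) x : ℂ)‖ ^ 2) (‖x‖ ^ 2) := by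
  have h := e.hasSum_inner_mul_inner x x
  have h2 : HasSum (fun i => ((‖(inner ℂ (e i) x : ℂ)‖ ^ 2 : ℝ) : ℂ)) ((‖x‖ ^ 2 : ℝ) : ℂ) := by
    have hf : (fun i => ((‖(inner ℂ (e i) x : ℂ)‖ ^ 2 : ℝ) : ℂ))
        = fun i => inner ℂ x (e i) * inner ℂ (e i) x := by
      funext i; rw [← inner_conj_symm x ((e : ι → E) i), RCLike.conj_mul]; norm_cast
    have hx : ((‖x‖ ^ 2 : ℝ) : ℂ) = inner ℂ x x := by
      rw [inner_self_eq_norm_sq_to_K]; norm_cast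
    rw [hf, hx]
    exact h
  have h3 := h2.mapL Complex.reCLM
  simpa [← Complex.ofReal_pow] using h3

lemma my_double {ι κ : Type} (g : ι → κ → ℝ) (h0 : ∀ i j, 0 ≤ g i j) (s : ι → ℝ)
    (hs : ∀ i, HasSum (g i) (s i)) :
    Summable (fun p : ι × κ => g p.1 p.2) ↔ Summable s := by
  rw [summable_prod_of_nonneg (fun p => h0 p.1 p.2)]
  have he : (fun i => ∑' j, g i j) = s := funext fun i => (hs i).tsum_eq
  constructor
  · rintro ⟨-, h2⟩; rwa [he] at h2
  · intro h
    exact ⟨fun i => (hs i).summable, by rwa [he]⟩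

lemma my_swap {ι κ : Type} (g : ι → κ → ℝ) (h0 : ∀ i j, 0 ≤ g i j) (s : ι → ℝ) (t : κ → ℝ)
    (hs : ∀ i, HasSum (g i) (s i)) (ht : ∀ j, HasSum (fun i => g i j) (t j)) :
    Summable s ↔ Summable t := by
  rw [← my_double g h0 s hs, ← my_double (fun j i => g i j) (fun j i => h0 i j) t ht]
  exact ((Equiv.prodComm κ ι).summable_iff (f := fun p : ι × κ => g p.1 p.2)).symm

variable {F : Type} [NormedAddCommGroup F] [InnerProductSpace ℂ F] [CompleteSpace F]

lemma my_sum_adjoint_iff {ι κ : Type} (e : HilbertBasis ι ℂ E) (f : HilbertBasis κ ℂ F)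
    (T : E →L[ℂ] F) :
    Summable (fun i => ‖T (e i)‖ ^ 2) ↔
      Summable (fun j => ‖ContinuousLinearMap.adjoint T (f j)‖ ^ 2) := by
  refine my_swap (fun i j => ‖(inner ℂ (f j) (T (e i)) : ℂ)‖ ^ 2)
    (fun i j => by positivity) _ _ (fun i => my_parseval f (T (e i))) (fun j => ?_)
  have h := my_parseval e (ContinuousLinearMap.adjoint T (f j))
  have key : ∀ i : ι, ‖(inner ℂ ((f : κ → F) j) (T ((e : ι → E) i)) : ℂ)‖ ^ 2
      = ‖(inner ℂ ((e : ι → E) i) (ContinuousLinearMap.adjoint T ((f : κ → F) j)) : ℂ)‖ ^ 2 := by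
    intro i
    rw [← ContinuousLinearMap.adjoint_inner_left, ← inner_conj_symm, RCLike.norm_conj]
  simp_rw [key]
  exact h

lemma hs_any_basis {T : E →L[ℂ] F} (hT : IsHilbertSchmidt T) {ι : Type}
    (e : HilbertBasis ι ℂ E) : Summable fun i => ‖T (e i)‖ ^ 2 := by
  obtain ⟨ι₀, e₀, h⟩ := hT
  obtain ⟨w, f, -⟩ := exists_hilbertBasis ℂ F
  exact (my_sum_adjoint_iff e f T).mpr ((my_sum_adjoint_iff e₀ f T).mp h)

lemma hs_adjoint {T : E →L[ℂ] F} (hT : IsHilbertSchmidt T) :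
    IsHilbertSchmidt (ContinuousLinearMap.adjoint T) := by
  obtain ⟨w, f, -⟩ := exists_hilbertBasis ℂ F
  obtain ⟨ι₀, e₀, h⟩ := hT
  exact ⟨w, f, (my_sum_adjoint_iff e₀ f T).mp h⟩

lemma hs_comp_left {T : E →L[ℂ] F} {G : Type} [NormedAddCommGroup G] [InnerProductSpace ℂ G]
    (S : F →L[ℂ] G) (hT : IsHilbertSchmidt T) : IsHilbertSchmidt (S.comp T) := by
  obtain ⟨ι₀, e₀, h⟩ := hT
  refine ⟨ι₀, e₀, Summable.of_nonneg_of_le (fun i => by positivity) (fun i => ?_)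
    (h.mul_left (‖S‖ ^ 2))⟩
  have h1 : ‖S (T (e₀ i))‖ ≤ ‖S‖ * ‖T (e₀ i)‖ := S.le_opNorm _
  have h2 : (0:ℝ) ≤ ‖S (T (e₀ i))‖ := norm_nonneg _
  simp only [ContinuousLinearMap.comp_apply]
  nlinarith [norm_nonneg (T (e₀ i)), norm_nonneg S]

lemma hs_comp_right {T : E →L[ℂ] F} (R : E →L[ℂ] E) (hT : IsHilbertSchmidt T) :
    IsHilbertSchmidt (T.comp R) := by
  have h1 := hs_adjoint (hs_comp_left (ContinuousLinearMap.adjoint R) (hs_adjoint hT))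
  rwa [← ContinuousLinearMap.adjoint_comp, ContinuousLinearMap.adjoint_adjoint] at h1

lemma hs_smul {T : E →L[ℂ] F} (c : ℂ) (hT : IsHilbertSchmidt T) : IsHilbertSchmidt (c • T) := by
  obtain ⟨ι₀, e₀, h⟩ := hT
  refine ⟨ι₀, e₀, ?_⟩
  simpa [mul_pow, norm_smul] using h.mul_left (‖c‖ ^ 2)

end aux

section alpha
variable {E : Type} [NormedAddCommGroup E] [InnerProductSpace ℂ E] [CompleteSpace E]

lemma hs_alpha {ι : Type} (e : HilbertBasis ι ℂ E) (α : E → E)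
    (hα_invol : ∀ x, α (α x) = x)
    (hα_inner : ∀ x y, (inner ℂ (α x) (α y) : ℂ) = (inner ℂ y x : ℂ))
    (b : E →L[ℂ] E)
    (h : Summable fun j => ‖ContinuousLinearMap.adjoint b (e j)‖ ^ 2) :
    Summable fun i => ‖b (α (e i))‖ ^ 2 := by
  have hαnorm : ∀ x, ‖α x‖ = ‖x‖ := by
    intro x
    have h1 : (inner ℂ (α x) (α x) : ℂ) = (inner ℂ x x : ℂ) := hα_inner x x
    rw [inner_self_eq_norm_sq_to_K, inner_self_eq_norm_sq_to_K] at h1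
    have h2 : (‖α x‖ : ℝ) ^ 2 = ‖x‖ ^ 2 := by exact_mod_cast h1
    nlinarith [norm_nonneg (α x), norm_nonneg x]
  refine (my_swap (fun i j => ‖(inner ℂ ((e : ι → E) j) (b (α ((e : ι → E) i))) : ℂ)‖ ^ 2)
    (fun i j => by positivity) _ _ (fun i => my_parseval e (b (α ((e : ι → E) i))))
    (fun j => ?_)).mpr h
  have hp := my_parseval e (α (ContinuousLinearMap.adjoint b ((e : ι → E) j)))
  have key : ∀ i : ι, ‖(inner ℂ ((e : ι → E) j) (b (α ((e : ι → E) i))) : ℂ)‖ ^ 2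
      = ‖(inner ℂ ((e : ι → E) i) (α (ContinuousLinearMap.adjoint b ((e : ι → E) j))) : ℂ)‖ ^ 2 := by
    intro i
    rw [← ContinuousLinearMap.adjoint_inner_left]
    have h3 : (inner ℂ (ContinuousLinearMap.adjoint b ((e : ι → E) j)) (α ((e : ι → E) i)) : ℂ)
        = (inner ℂ (α (α (ContinuousLinearMap.adjoint b ((e : ι → E) j)))) (α ((e : ι → E) i)) : ℂ) := by
      rw [hα_invol]
    rw [h3, hα_inner]
  simp_rw [key]
  rwa [hαnorm] at hp
end alpha

/-- For u ∈ Sp(H) with block form [[a, αbα],[b, αaα]]: the restriction to L⁺ of the projection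
onto L⁻ along u(L⁺) ⊕ u(L⁻) is Hilbert–Schmidt iff b is Hilbert–Schmidt iff u⁻¹Ju - J is
Hilbert–Schmidt; moreover u⁻¹Ju - J = 2i[[b*b, b*αaα],[-αb*αa, -αb*bα]]. -/
theorem restricted_symplectic_characterization {E : Type} [NormedAddCommGroup E]
    [InnerProductSpace ℂ E] [CompleteSpace E]
    (α : E → E) (J : E →L[ℂ] E)
    (hα_add : ∀ x y, α (x + y) = α x + α y)
    (hα_smul : ∀ (c : ℂ) (x : E), α (c • x) = (starRingEnd ℂ) c • α x)
    (hα_invol : ∀ x, α (α x) = x)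
    (hα_inner : ∀ x y, (inner ℂ (α x) (α y) : ℂ) = (inner ℂ y x : ℂ))
    (hJJ : ∀ x, J (J x) = -x)
    (hJα : ∀ x, J (α x) = α (J x))
    (hJskew : ∀ x y, (inner ℂ (J x) y : ℂ) = - (inner ℂ x (J y) : ℂ))
    (u u' a b : E →L[ℂ] E)
    (hu_symp : ∀ x y, (inner ℂ (α (u y)) (J (u x)) : ℂ) = (inner ℂ (α y) (J x) : ℂ))
    (hu_α : ∀ x, u (α x) = α (u x))
    (huu' : ∀ x, u' (u x) = x) (hu'u : ∀ x, u (u' x) = x)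
    (ha_mem : ∀ x ∈ LinearMap.ker ((J - Complex.I • (1 : E →L[ℂ] E) : E →L[ℂ] E) : E →ₗ[ℂ] E),
      a x ∈ LinearMap.ker ((J - Complex.I • (1 : E →L[ℂ] E) : E →L[ℂ] E) : E →ₗ[ℂ] E))
    (ha_zero : ∀ x ∈ LinearMap.ker ((J + Complex.I • (1 : E →L[ℂ] E) : E →L[ℂ] E) : E →ₗ[ℂ] E), a x = 0)
    (hb_mem : ∀ x ∈ LinearMap.ker ((J - Complex.I • (1 : E →L[ℂ] E) : E →L[ℂ] E) : E →ₗ[ℂ] E),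
      b x ∈ LinearMap.ker ((J + Complex.I • (1 : E →L[ℂ] E) : E →L[ℂ] E) : E →ₗ[ℂ] E))
    (hb_zero : ∀ x ∈ LinearMap.ker ((J + Complex.I • (1 : E →L[ℂ] E) : E →L[ℂ] E) : E →ₗ[ℂ] E), b x = 0)
    (hblock : ∀ x ∈ LinearMap.ker ((J - Complex.I • (1 : E →L[ℂ] E) : E →L[ℂ] E) : E →ₗ[ℂ] E), u x = a x + b x)
    (Pp Pm : E →L[ℂ] E)
    (hPp_mem : ∀ x, Pp x ∈ LinearMap.ker ((J - Complex.I • (1 : E →L[ℂ] E) : E →L[ℂ] E) : E →ₗ[ℂ] E))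
    (hPm_mem : ∀ x, Pm x ∈ LinearMap.ker ((J + Complex.I • (1 : E →L[ℂ] E) : E →L[ℂ] E) : E →ₗ[ℂ] E))
    (hsum : ∀ x, Pp x + Pm x = x)
    (hPp_id : ∀ x ∈ LinearMap.ker ((J - Complex.I • (1 : E →L[ℂ] E) : E →L[ℂ] E) : E →ₗ[ℂ] E), Pp x = x)
    (hPm_id : ∀ x ∈ LinearMap.ker ((J + Complex.I • (1 : E →L[ℂ] E) : E →L[ℂ] E) : E →ₗ[ℂ] E), Pm x = x) :
    (IsHilbertSchmidt (Pm.comp (u.comp Pp)) ↔ IsHilbertSchmidt b) ∧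
    (IsHilbertSchmidt b ↔ IsHilbertSchmidt (u'.comp (J.comp u) - J)) ∧
    (∀ x ∈ LinearMap.ker ((J - Complex.I • (1 : E →L[ℂ] E) : E →L[ℂ] E) : E →ₗ[ℂ] E),
      u' (J (u x)) - J x = (2 * Complex.I) •
        (ContinuousLinearMap.adjoint b (b x)
          - α (ContinuousLinearMap.adjoint b (α (a x))))) ∧
    (∀ y ∈ LinearMap.ker ((J + Complex.I • (1 : E →L[ℂ] E) : E →L[ℂ] E) : E →ₗ[ℂ] E),
      u' (J (u y)) - J y = (2 * Complex.I) •
        (ContinuousLinearMap.adjoint b (α (a (α y)))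
          - α (ContinuousLinearMap.adjoint b (b (α y))))) := by
  set Kp := LinearMap.ker ((J - Complex.I • (1 : E →L[ℂ] E) : E →L[ℂ] E) : E →ₗ[ℂ] E) with hKp
  set Km := LinearMap.ker ((J + Complex.I • (1 : E →L[ℂ] E) : E →L[ℂ] E) : E →ₗ[ℂ] E) with hKm
  set b' := ContinuousLinearMap.adjoint b with hb'
  set a' := ContinuousLinearMap.adjoint a with ha'
  -- membership characterizations
  have hp : ∀ x, x ∈ Kp ↔ J x = Complex.I • x := by
    intro x
    rw [hKp, LinearMap.mem_ker]
    constructor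
    · intro h
      have h1 : J x - Complex.I • x = 0 := by simpa using h
      rwa [sub_eq_zero] at h1
    · intro h
      simp [ContinuousLinearMap.sub_apply, ContinuousLinearMap.smul_apply,
        ContinuousLinearMap.one_apply, h]
  have hm : ∀ x, x ∈ Km ↔ J x = -(Complex.I • x) := by
    intro x
    rw [hKm, LinearMap.mem_ker]
    constructor
    · intro h
      have h1 : J x + Complex.I • x = 0 := by simpa using h
      exact eq_neg_of_add_eq_zero_left h1
    · intro h
      simp [ContinuousLinearMap.add_apply, ContinuousLinearMap.smul_apply,
        ContinuousLinearMap.one_apply, h]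
  -- α basics
  have hα0 : α 0 = 0 := by
    have h1 := hα_add 0 0
    simp only [add_zero] at h1
    exact add_left_cancel (h1.symm.trans (add_zero _).symm)
  have hαneg : ∀ x, α (-x) = -(α x) := by
    intro x
    have h1 : α x + α (-x) = 0 := by rw [← hα_add, add_neg_cancel, hα0]
    exact eq_neg_of_add_eq_zero_right h1
  have hαsub : ∀ x y, α (x - y) = α x - α y := by
    intro x y
    rw [sub_eq_add_neg, hα_add, hαneg, sub_eq_add_neg]
  have hαnorm : ∀ x, ‖α x‖ = ‖x‖ := by
    intro x
    have h1 : (inner ℂ (α x) (α x) : ℂ) = (inner ℂ x x : ℂ) := hα_inner x x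
    rw [inner_self_eq_norm_sq_to_K, inner_self_eq_norm_sq_to_K] at h1
    have h2 : (‖α x‖ : ℝ) ^ 2 = ‖x‖ ^ 2 := by exact_mod_cast h1
    nlinarith [norm_nonneg (α x), norm_nonneg x]
  -- orthogonality
  have horth : ∀ x ∈ Kp, ∀ y ∈ Km, (inner ℂ x y : ℂ) = 0 := by
    intro x hx y hy
    have h1 := hJskew x y
    rw [(hp x).mp hx, (hm y).mp hy] at h1
    simp only [inner_smul_left, inner_neg_right, inner_smul_right, Complex.conj_I] at h1
    have h2 : (2 * Complex.I) * (inner ℂ x y : ℂ) = 0 := by linear_combination -h1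
    have hI : (2 * Complex.I : ℂ) ≠ 0 := by simp [Complex.I_ne_zero]
    exact (mul_eq_zero.mp h2).resolve_left hI
  have horth' : ∀ y ∈ Km, ∀ x ∈ Kp, (inner ℂ y x : ℂ) = 0 := by
    intro y hy x hx
    rw [← inner_conj_symm, horth x hx y hy, map_zero]
  have hαKp : ∀ x ∈ Kp, α x ∈ Km := by
    intro x hx
    rw [hm, hJα, (hp x).mp hx, hα_smul]
    simp [Complex.conj_I, neg_smul]
  have hαKm : ∀ x ∈ Km, α x ∈ Kp := by
    intro x hx
    rw [hp, hJα, (hm x).mp hx, hαneg, hα_smul]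
    simp [Complex.conj_I, neg_smul]
  have hmemp : ∀ v, (∀ y ∈ Km, (inner ℂ y v : ℂ) = 0) → v ∈ Kp := by
    intro v hv
    have h2 := hv (Pm v) (hPm_mem v)
    have h3 : (inner ℂ (Pm v) (Pp v + Pm v) : ℂ) = 0 := by rw [hsum]; exact h2
    rw [inner_add_right, horth' (Pm v) (hPm_mem v) (Pp v) (hPp_mem v), zero_add] at h3
    have h4 : Pm v = 0 := inner_self_eq_zero.mp h3
    have h5 := hsum v
    rw [h4, add_zero] at h5
    rw [← h5]
    exact hPp_mem v
  have hastar : ∀ y, a' y ∈ Kp := by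
    intro y
    apply hmemp
    intro z hz
    rw [ha', ContinuousLinearMap.adjoint_inner_right, ha_zero z hz, inner_zero_left]
  have hbstar : ∀ y, b' y ∈ Kp := by
    intro y
    apply hmemp
    intro z hz
    rw [hb', ContinuousLinearMap.adjoint_inner_right, hb_zero z hz, inner_zero_left]
  have heqp : ∀ v ∈ Kp, ∀ w ∈ Kp, (∀ x ∈ Kp, (inner ℂ v x : ℂ) = (inner ℂ w x : ℂ)) → v = w := by
    intro v hv w hw h
    have h1 : (inner ℂ (v - w) (v - w) : ℂ) = 0 := by
      rw [inner_sub_left, h (v - w) (Kp.sub_mem hv hw), sub_self]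
    exact sub_eq_zero.mp (inner_self_eq_zero.mp h1)
  have heqp' : ∀ v ∈ Kp, ∀ w ∈ Kp, (∀ x ∈ Kp, (inner ℂ x v : ℂ) = (inner ℂ x w : ℂ)) → v = w := by
    intro v hv w hw h
    apply heqp v hv w hw
    intro x hx
    rw [← inner_conj_symm, h x hx, inner_conj_symm]
  have hbPp : ∀ z, b (Pp z) = b z := by
    intro z
    conv_rhs => rw [← hsum z]
    rw [map_add, hb_zero (Pm z) (hPm_mem z), add_zero]
  have hbαPm : ∀ z, b (α (Pm z)) = b (α z) := by
    intro z
    conv_rhs => rw [← hsum z]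
    rw [hα_add, map_add, hb_zero (α (Pp z)) (hαKp _ (hPp_mem z)), zero_add]
  have hPm0 : ∀ v ∈ Kp, Pm v = 0 := by
    intro v hv
    have h1 := hsum v
    rw [hPp_id v hv] at h1
    simpa using h1
  have huinj : ∀ z z', u z = u z' → z = z' := by
    intro z z' h
    rw [← huu' z, h, huu']
  have hu'α : ∀ z, u' (α z) = α (u' z) := by
    intro z
    apply huinj
    rw [hu'u, hu_α, hu'u]
  -- u' block formula
  have hu'f : ∀ w ∈ Kp, u' w = a' w - α (b' (α w)) := by
    intro w hw
    have hP := hPp_mem (u' w)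
    have hQ := hPm_mem (u' w)
    have hrel : ∀ x, (inner ℂ (α w) (J (u x)) : ℂ)
        = (inner ℂ (α (Pp (u' w) + Pm (u' w))) (J x) : ℂ) := by
      intro x
      have h := hu_symp x (u' w)
      rw [hu'u] at h
      rw [hsum]
      exact h
    have hQeq : α (Pm (u' w)) = -(b' (α w)) := by
      apply heqp _ (hαKm _ hQ) _ (Kp.neg_mem (hbstar _))
      intro x hx
      have h := hrel x
      rw [hα_add, hblock x hx, map_add, (hp _).mp (ha_mem x hx), (hm _).mp (hb_mem x hx),
        (hp x).mp hx] at h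
      simp only [inner_add_right, inner_add_left, inner_neg_right, inner_smul_right] at h
      rw [horth' (α w) (hαKp w hw) (a x) (ha_mem x hx),
        horth' (α (Pp (u' w))) (hαKp _ hP) x hx] at h
      have hgoal : Complex.I * (inner ℂ (α (Pm (u' w))) x : ℂ)
          = Complex.I * (-(inner ℂ (α w) (b x) : ℂ)) := by linear_combination -h
      have h2 := mul_left_cancel₀ Complex.I_ne_zero hgoal
      rw [inner_neg_left, hb', ContinuousLinearMap.adjoint_inner_left]
      exact h2
    have hPeq : Pp (u' w) = a' w := by
      apply heqp' _ hP _ (hastar w)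
      intro z hz
      have h := hrel (α z)
      rw [hu_α, hJα, hJα, hα_inner, hα_inner] at h
      rw [hblock z hz, map_add, (hp _).mp (ha_mem z hz), (hm _).mp (hb_mem z hz),
        (hp z).mp hz] at h
      simp only [inner_add_left, inner_add_right, inner_neg_left, inner_smul_left,
        Complex.conj_I] at h
      rw [horth' (b z) (hb_mem z hz) w hw, horth z hz (Pm (u' w)) hQ] at h
      have h3 : (-Complex.I) * (inner ℂ z (Pp (u' w)) : ℂ)
          = (-Complex.I) * (inner ℂ (a z) w : ℂ) := by linear_combination -h
      have h2 := mul_left_cancel₀ (neg_ne_zero.mpr Complex.I_ne_zero) h3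
      rw [ha', ContinuousLinearMap.adjoint_inner_right]
      exact h2
    have hPQ : u' w = Pp (u' w) + Pm (u' w) := (hsum _).symm
    have hQ2 : Pm (u' w) = -(α (b' (α w))) := by
      have h5 := congrArg α hQeq
      rw [hα_invol, hαneg] at h5
      exact h5
    rw [hPQ, hPeq, hQ2, sub_eq_add_neg]
  -- symmetry relation R2
  have hR2 : ∀ y ∈ Kp, a' (α (b y)) = b' (α (a y)) := by
    intro y hy
    apply heqp _ (hastar _) _ (hbstar _)
    intro x hx
    have h := hu_symp x y
    rw [hblock y hy, hα_add, hblock x hx, map_add, (hp _).mp (ha_mem x hx),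
      (hm _).mp (hb_mem x hx), (hp x).mp hx] at h
    simp only [inner_add_left, inner_add_right, inner_neg_right, inner_smul_right] at h
    rw [horth' (α (a y)) (hαKp _ (ha_mem y hy)) (a x) (ha_mem x hx),
      horth (α (b y)) (hαKm _ (hb_mem y hy)) (b x) (hb_mem x hx),
      horth' (α y) (hαKp y hy) x hx] at h
    have h3 : Complex.I * (inner ℂ (α (b y)) (a x) : ℂ)
        = Complex.I * (inner ℂ (α (a y)) (b x) : ℂ) := by linear_combination h
    have h2 := mul_left_cancel₀ Complex.I_ne_zero h3
    rw [ha', hb', ContinuousLinearMap.adjoint_inner_left, ContinuousLinearMap.adjoint_inner_left]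
    exact h2
  -- key formula for u' (b x)
  have hbx : ∀ x ∈ Kp, u' (b x) = α (b' (α (a x))) - b' (b x) := by
    intro x hx
    have hv : α (b x) ∈ Kp := hαKm _ (hb_mem x hx)
    have h1 := hu'f (α (b x)) hv
    rw [hα_invol] at h1
    have h2 : u' (b x) = α (u' (α (b x))) := by rw [hu'α, hα_invol]
    rw [h2, h1, hαsub, hα_invol, hR2 x hx]
  -- pointwise formula on Kp, raw version
  have hDp : ∀ w ∈ Kp, u' (J (u w)) - J w = -((2 * Complex.I) • u' (b w)) := by
    intro w hw
    have h1 : u' (a w) + u' (b w) = w := by rw [← map_add, ← hblock w hw, huu']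
    have h2 : J (u w) = Complex.I • a w + -(Complex.I • b w) := by
      rw [hblock w hw, map_add, (hp _).mp (ha_mem w hw), (hm _).mp (hb_mem w hw)]
    have h1' : u' (a w) = w - u' (b w) := eq_sub_of_add_eq h1
    rw [h2, map_add, map_neg, map_smul, map_smul, (hp w).mp hw, h1']
    module
  have hDm : ∀ w ∈ Km, u' (J (u w)) - J w = α (-((2 * Complex.I) • u' (b (α w)))) := by
    intro w hw
    have hαw : α w ∈ Kp := hαKm w hw
    calc u' (J (u w)) - J w = u' (J (u (α (α w)))) - J (α (α w)) := by rw [hα_invol]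
      _ = α (u' (J (u (α w)))) - α (J (α w)) := by rw [hu_α, hJα, hu'α, hJα]
      _ = α (u' (J (u (α w))) - J (α w)) := (hαsub _ _).symm
      _ = α (-((2 * Complex.I) • u' (b (α w)))) := by rw [hDp (α w) hαw]
  -- part 3
  have main3 : ∀ x ∈ Kp, u' (J (u x)) - J x
      = (2 * Complex.I) • (b' (b x) - α (b' (α (a x)))) := by
    intro x hx
    rw [hDp x hx, hbx x hx]
    module
  -- part 4
  have main4 : ∀ y ∈ Km, u' (J (u y)) - J y
      = (2 * Complex.I) • (b' (α (a (α y))) - α (b' (b (α y)))) := by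
    intro y hy
    have hx : α y ∈ Kp := hαKm y hy
    rw [hDm y hy, hbx (α y) hx, hαneg, hα_smul, hαsub, hα_invol]
    have hc : (starRingEnd ℂ) (2 * Complex.I) = -(2 * Complex.I) := by
      apply Complex.ext <;> simp
    rw [hc, neg_smul, neg_neg]
  -- the operator D = u⁻¹Ju - J
  set D := u'.comp (J.comp u) - J with hD
  have hDapp : ∀ z, D z = u' (J (u z)) - J z := fun z => rfl
  have hnc : ‖(2 * Complex.I : ℂ)‖ = 2 := by simp
  -- Part 1: the projection operator equals b
  have heq1 : Pm.comp (u.comp Pp) = b := by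
    ext z
    simp only [ContinuousLinearMap.comp_apply]
    rw [hblock _ (hPp_mem z), map_add, hPm0 (a (Pp z)) (ha_mem _ (hPp_mem z)),
      hPm_id _ (hb_mem _ (hPp_mem z)), zero_add, hbPp]
  -- Part 2 forward
  have fwd : IsHilbertSchmidt b → IsHilbertSchmidt D := by
    rintro ⟨ι, e, hsb⟩
    have hsb' : Summable fun j => ‖ContinuousLinearMap.adjoint b ((e : ι → E) j)‖ ^ 2 :=
      (my_sum_adjoint_iff e e b).mp hsb
    have hαs : Summable fun i => ‖b (α ((e : ι → E) i))‖ ^ 2 :=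
      hs_alpha e α hα_invol hα_inner b hsb'
    refine ⟨ι, e, Summable.of_nonneg_of_le (fun i => by positivity) (fun i => ?_)
      ((hsb.add hαs).mul_left (8 * ‖u'‖ ^ 2))⟩
    set z := (e : ι → E) i with hz
    have hsplit : D z = (u' (J (u (Pp z))) - J (Pp z)) + (u' (J (u (Pm z))) - J (Pm z)) := by
      calc D z = D (Pp z + Pm z) := by rw [hsum]
        _ = D (Pp z) + D (Pm z) := map_add D _ _
        _ = _ := by rw [hDapp, hDapp]
    have h1 : ‖u' (J (u (Pp z))) - J (Pp z)‖ ≤ 2 * ‖u'‖ * ‖b z‖ := by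
      rw [hDp (Pp z) (hPp_mem z), hbPp, norm_neg, norm_smul, hnc]
      have h5 := u'.le_opNorm (b z)
      nlinarith [norm_nonneg u', norm_nonneg (b z)]
    have h2 : ‖u' (J (u (Pm z))) - J (Pm z)‖ ≤ 2 * ‖u'‖ * ‖b (α z)‖ := by
      rw [hDm (Pm z) (hPm_mem z), hαnorm, hbαPm, norm_neg, norm_smul, hnc]
      have h5 := u'.le_opNorm (b (α z))
      nlinarith [norm_nonneg u', norm_nonneg (b (α z))]
    have h3 : ‖D z‖ ≤ 2 * ‖u'‖ * ‖b z‖ + 2 * ‖u'‖ * ‖b (α z)‖ := by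
      rw [hsplit]
      exact (norm_add_le _ _).trans (add_le_add h1 h2)
    have h4 : (0:ℝ) ≤ ‖D z‖ := norm_nonneg _
    nlinarith [norm_nonneg u', norm_nonneg (b z), norm_nonneg (b (α z)), sq_nonneg (‖b z‖ - ‖b (α z)‖), sq_nonneg (2*‖u'‖*‖b z‖ - 2*‖u'‖*‖b (α z)‖)]
  -- Part 2 backward
  have bwd : IsHilbertSchmidt D → IsHilbertSchmidt b := by
    intro hDhs
    have hbKm : ∀ z, b z ∈ Km := fun z => hbPp z ▸ hb_mem _ (hPp_mem z)
    have heqb : (Complex.I / 2) • ((Pm.comp u).comp (D.comp Pp)) = b := by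
      ext z
      simp only [ContinuousLinearMap.smul_apply, ContinuousLinearMap.comp_apply]
      rw [hDapp, hDp (Pp z) (hPp_mem z), hbPp, map_neg, map_smul, hu'u, map_neg, map_smul,
        hPm_id _ (hbKm z), smul_neg, smul_smul]
      have hc : Complex.I / 2 * (2 * Complex.I) = -1 := by
        linear_combination Complex.I_mul_I
      rw [hc]
      simp
    rw [← heqb]
    exact hs_smul _ (hs_comp_left (Pm.comp u) (hs_comp_right Pp hDhs))
  exact ⟨by rw [heq1], ⟨fwd, bwd⟩, main3, main4⟩
end
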